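/- Let N be an odd Niemeier lattice of minimum norm 2 whose two even neighbors have root sublattices isometric to D₂₄ and A₂₄ respectively. Then N does not contain a sublattice isometric to L⁺. -/

import Mathlib

open scoped BigOperators

namespace Niemeier

variable {V : Type*} [AddCommGroup V] [Module ℚ V]
variable {W : Type*} [AddCommGroup W] [Module ℚ W]

/-- The dual lattice of a `ℤ`-submodule `L` of a rational vector space `V` with respect to the
bilinear form `B`: all vectors pairing integrally with every element of `L`. -/
def dualLattice (B : V →ₗ[ℚ] V →ₗ[ℚ] ℚ) (L : Submodule ℤ V) : Submodule ℤ V where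
  carrier := {x | ∀ y ∈ L, ∃ n : ℤ, B x y = n}
  zero_mem' := by
    intro y hy
    exact ⟨0, by simp⟩
  add_mem' := by
    intro a b ha hb y hy
    obtain ⟨m, hm⟩ := ha y hy
    obtain ⟨k, hk⟩ := hb y hy
    exact ⟨m + k, by push_cast [map_add, LinearMap.add_apply, hm, hk]; rfl⟩
  smul_mem' := by
    intro c x hx y hy
    obtain ⟨m, hm⟩ := hx y hy
    refine ⟨c * m, ?_⟩
    have h1 : B (c • x) y = c • (B x y) := by
      rw [map_zsmul]; rfl
    rw [h1, hm, zsmul_eq_mul]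
    push_cast
    ring

/-- `B` is a symmetric positive-definite bilinear form. -/
def IsPosDefSymm (B : V →ₗ[ℚ] V →ₗ[ℚ] ℚ) : Prop :=
  (∀ x y, B x y = B y x) ∧ ∀ x : V, x ≠ 0 → 0 < B x x

/-- `L` is a (full-rank, integral) lattice in `V` with respect to `B`. -/
structure IsIntegralLattice (B : V →ₗ[ℚ] V →ₗ[ℚ] ℚ) (L : Submodule ℤ V) : Prop where
  fg : L.FG
  spans : Submodule.span ℚ (L : Set V) = ⊤
  integral : L ≤ dualLattice B L

/-- `L` is unimodular: it coincides with its dual lattice. -/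
def IsUnimodular (B : V →ₗ[ℚ] V →ₗ[ℚ] ℚ) (L : Submodule ℤ V) : Prop :=
  L = dualLattice B L

/-- `L` is an even lattice: all norms are even integers. -/
def IsEvenLat (B : V →ₗ[ℚ] V →ₗ[ℚ] ℚ) (L : Submodule ℤ V) : Prop :=
  ∀ v ∈ L, ∃ n : ℤ, B v v = 2 * n

/-- `L` is an odd lattice: some vector has odd (integer) norm. -/
def IsOddLat (B : V →ₗ[ℚ] V →ₗ[ℚ] ℚ) (L : Submodule ℤ V) : Prop :=
  ∃ v ∈ L, ∃ n : ℤ, B v v = 2 * n + 1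

/-- An odd Niemeier lattice: an odd positive-definite unimodular integral lattice of rank 24
(positive-definiteness of `B` is a separate hypothesis). -/
def IsOddNiemeier (B : V →ₗ[ℚ] V →ₗ[ℚ] ℚ) (N : Submodule ℤ V) : Prop :=
  IsIntegralLattice B N ∧ IsUnimodular B N ∧ IsOddLat B N ∧ Module.finrank ℚ V = 24

/-- `D` is a subgroup of index two in `L`. -/
def IndexTwo (D L : Submodule ℤ V) : Prop :=
  D ≤ L ∧ ∃ a ∈ L, a ∉ D ∧ ∀ x ∈ L, x ∈ D ∨ x - a ∈ D

/-- Two lattices are neighbors if their intersection has index two in each of them. -/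
def Neighbors (L M : Submodule ℤ V) : Prop :=
  IndexTwo (L ⊓ M) L ∧ IndexTwo (L ⊓ M) M

/-- `E` is an even neighbor of the odd Niemeier lattice `N`: an even unimodular integral
lattice (in the same ambient space) which is a neighbor of `N`. -/
def IsEvenNeighbor (B : V →ₗ[ℚ] V →ₗ[ℚ] ℚ) (N E : Submodule ℤ V) : Prop :=
  IsIntegralLattice B E ∧ IsUnimodular B E ∧ IsEvenLat B E ∧ Neighbors N E

/-- The minimum norm of `L` equals `m`. -/
def HasMinNorm (B : V →ₗ[ℚ] V →ₗ[ℚ] ℚ) (L : Submodule ℤ V) (m : ℚ) : Prop :=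
  (∃ v ∈ L, v ≠ 0 ∧ B v v = m) ∧ ∀ v ∈ L, v ≠ 0 → m ≤ B v v

/-- `N` contains a sublattice isometric to the rank-6 lattice `L⁺`, i.e. there are vectors
`h, a 0, …, a 4` in `N` realizing the Gram matrix of `L⁺`. -/
def ContainsLPlus (B : V →ₗ[ℚ] V →ₗ[ℚ] ℚ) (N : Submodule ℤ V) : Prop :=
  ∃ h ∈ N, ∃ a : Fin 5 → V, (∀ i, a i ∈ N) ∧
    B h h = 2 ∧ (∀ i, B h (a i) = 1) ∧ (∀ i, B (a i) (a i) = 3) ∧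
    ∀ i j, i ≠ j → B (a i) (a j) = 0

/-- Two lattices (in possibly different ambient spaces, with forms `B` and `C`) are isometric:
there is a `ℤ`-linear bijection between them preserving the bilinear forms. -/
def LatticeIsometric (B : V → V → ℚ) (C : W → W → ℚ)
    (L : Submodule ℤ V) (M : Submodule ℤ W) : Prop :=
  ∃ f : L ≃ₗ[ℤ] M, ∀ x y : L, C (f x) (f y) = B x y

/-- The standard dot product on `ℚⁿ`. -/
def stdDot (n : ℕ) : (Fin n → ℚ) → (Fin n → ℚ) → ℚ := fun x y => ∑ i, x i * y i

/-- The orthogonal sum of two bilinear forms. -/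
def prodForm (B : V → V → ℚ) (C : W → W → ℚ) : V × W → V × W → ℚ :=
  fun p q => B p.1 q.1 + C p.2 q.2

/-- A vector in `ℚⁿ` has integer coordinates. -/
def IsIntVec {n : ℕ} (x : Fin n → ℚ) : Prop := ∀ i, ∃ m : ℤ, x i = m

/-- The root lattice `Dₙ = {x ∈ ℤⁿ : ∑ xᵢ even}`. -/
def latD (n : ℕ) : Submodule ℤ (Fin n → ℚ) where
  carrier := {x | IsIntVec x ∧ ∃ k : ℤ, ∑ i, x i = 2 * k}
  zero_mem' := by
    refine ⟨fun i => ⟨0, by simp⟩, 0, by simp⟩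
  add_mem' := by
    rintro a b ⟨ha, k₁, hk₁⟩ ⟨hb, k₂, hk₂⟩
    refine ⟨fun i => ?_, k₁ + k₂, ?_⟩
    · obtain ⟨m, hm⟩ := ha i
      obtain ⟨m', hm'⟩ := hb i
      exact ⟨m + m', by simp [Pi.add_apply, hm, hm']⟩
    · simp only [Pi.add_apply, Finset.sum_add_distrib, hk₁, hk₂]
      push_cast
      ring
  smul_mem' := by
    rintro c x ⟨hx, k, hk⟩
    refine ⟨fun i => ?_, c * k, ?_⟩
    · obtain ⟨m, hm⟩ := hx i
      exact ⟨c * m, by simp [Pi.smul_apply, hm, zsmul_eq_mul]⟩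
    · have : ∑ i, (c • x) i = c • ∑ i, x i := by
        simp [Pi.smul_apply, Finset.smul_sum]
      rw [this, hk, zsmul_eq_mul]
      push_cast
      ring

/-- The root lattice `Aₙ = {x ∈ ℤⁿ⁺¹ : ∑ xᵢ = 0}`. -/
def latA (n : ℕ) : Submodule ℤ (Fin (n + 1) → ℚ) where
  carrier := {x | IsIntVec x ∧ ∑ i, x i = 0}
  zero_mem' := ⟨fun i => ⟨0, by simp⟩, by simp⟩
  add_mem' := by
    rintro a b ⟨ha, hka⟩ ⟨hb, hkb⟩
    refine ⟨fun i => ?_, ?_⟩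
    · obtain ⟨m, hm⟩ := ha i
      obtain ⟨m', hm'⟩ := hb i
      exact ⟨m + m', by simp [Pi.add_apply, hm, hm']⟩
    · simp [Pi.add_apply, Finset.sum_add_distrib, hka, hkb]
  smul_mem' := by
    rintro c x ⟨hx, hk⟩
    refine ⟨fun i => ?_, ?_⟩
    · obtain ⟨m, hm⟩ := hx i
      exact ⟨c * m, by simp [Pi.smul_apply, hm, zsmul_eq_mul]⟩
    · have : ∑ i, (c • x) i = c • ∑ i, x i := by
        simp [Pi.smul_apply, Finset.smul_sum]
      rw [this, hk, smul_zero]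

/-- The root lattice `E₈ = D₈ + ℤ·(½,…,½)`. -/
def latE8 : Submodule ℤ (Fin 8 → ℚ) :=
  latD 8 ⊔ Submodule.span ℤ {fun _ => (1 : ℚ) / 2}

/-- The root sublattice of `E`: the `ℤ`-span of its vectors of norm 2. -/
def rootSublattice (B : V →ₗ[ℚ] V →ₗ[ℚ] ℚ) (E : Submodule ℤ V) : Submodule ℤ V :=
  Submodule.span ℤ {v : V | v ∈ E ∧ B v v = 2}

/-- The set of even-norm vectors of `N` (the even sublattice, as a set). -/
def evenSet (B : V →ₗ[ℚ] V →ₗ[ℚ] ℚ) (N : Submodule ℤ V) : Set V :=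
  {x | x ∈ N ∧ ∃ n : ℤ, B x x = 2 * n}

/-- The unordered pair of root sublattices of `E₁` and `E₂` is isometric to the pair
`(M₁, M₂)`. -/
def RootPairIso {W₁ W₂ : Type*} [AddCommGroup W₁] [Module ℚ W₁]
    [AddCommGroup W₂] [Module ℚ W₂]
    (B : V →ₗ[ℚ] V →ₗ[ℚ] ℚ) (E₁ E₂ : Submodule ℤ V)
    (C₁ : W₁ → W₁ → ℚ) (M₁ : Submodule ℤ W₁)
    (C₂ : W₂ → W₂ → ℚ) (M₂ : Submodule ℤ W₂) : Prop :=
  (LatticeIsometric (fun x y => B x y) C₁ (rootSublattice B E₁) M₁ ∧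
    LatticeIsometric (fun x y => B x y) C₂ (rootSublattice B E₂) M₂) ∨
  (LatticeIsometric (fun x y => B x y) C₂ (rootSublattice B E₁) M₂ ∧
    LatticeIsometric (fun x y => B x y) C₁ (rootSublattice B E₂) M₁)

/-- The unordered pair of root sublattices of `E₁`, `E₂` is one of the four exceptional pairs
`{E₈³, D₈³}`, `{D₁₆⊕E₈, A₁₅⊕D₉}`, `{D₁₂², A₁₂²}`, `{D₂₄, A₂₄}`. -/
def IsExceptionalPair (B : V →ₗ[ℚ] V →ₗ[ℚ] ℚ) (E₁ E₂ : Submodule ℤ V) : Prop :=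
  RootPairIso B E₁ E₂
    (prodForm (stdDot 8) (prodForm (stdDot 8) (stdDot 8))) (latE8.prod (latE8.prod latE8))
    (prodForm (stdDot 8) (prodForm (stdDot 8) (stdDot 8))) ((latD 8).prod ((latD 8).prod (latD 8))) ∨
  RootPairIso B E₁ E₂
    (prodForm (stdDot 16) (stdDot 8)) ((latD 16).prod latE8)
    (prodForm (stdDot 16) (stdDot 9)) ((latA 15).prod (latD 9)) ∨
  RootPairIso B E₁ E₂
    (prodForm (stdDot 12) (stdDot 12)) ((latD 12).prod (latD 12))
    (prodForm (stdDot 13) (stdDot 13)) ((latA 12).prod (latA 12)) ∨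
  RootPairIso B E₁ E₂
    (stdDot 24) (latD 24)
    (stdDot 25) (latA 24)


/-! ### Auxiliary material for `stmt2` -/

section Stmt2Aux

set_option linter.unusedSectionVars false

open Finset

/-- standard basis vector in `ℚⁿ` -/
def sv (n : ℕ) (i : Fin n) : Fin n → ℚ := fun j => if j = i then 1 else 0

lemma stdDot_comm (n : ℕ) (x y : Fin n → ℚ) : stdDot n x y = stdDot n y x :=
  Finset.sum_congr rfl (fun _ _ => mul_comm _ _)

lemma stdDot_sv (n : ℕ) (x : Fin n → ℚ) (i : Fin n) : stdDot n x (sv n i) = x i := by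
  unfold stdDot sv
  rw [Finset.sum_eq_single i]
  · simp
  · intro b _ hb
    simp [hb]
  · simp

lemma sv_apply_self (n : ℕ) (i : Fin n) : sv n i i = 1 := by simp [sv]

lemma sv_apply_ne (n : ℕ) {i j : Fin n} (h : j ≠ i) : sv n i j = 0 := by simp [sv, h]

lemma stdDot_add_left (n : ℕ) (x y z : Fin n → ℚ) :
    stdDot n (x + y) z = stdDot n x z + stdDot n y z := by
  unfold stdDot
  rw [← Finset.sum_add_distrib]
  exact Finset.sum_congr rfl (fun _ _ => by simp [add_mul])

lemma stdDot_add_right (n : ℕ) (x y z : Fin n → ℚ) :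
    stdDot n x (y + z) = stdDot n x y + stdDot n x z := by
  rw [stdDot_comm, stdDot_add_left, stdDot_comm n y x, stdDot_comm n z x]

lemma stdDot_smul_left (n : ℕ) (c : ℚ) (x y : Fin n → ℚ) :
    stdDot n (c • x) y = c * stdDot n x y := by
  unfold stdDot
  rw [Finset.mul_sum]
  exact Finset.sum_congr rfl (fun _ _ => by simp [mul_assoc])

lemma stdDot_smul_right (n : ℕ) (c : ℚ) (x y : Fin n → ℚ) :
    stdDot n x (c • y) = c * stdDot n x y := by
  rw [stdDot_comm, stdDot_smul_left, stdDot_comm]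

lemma stdDot_neg_right (n : ℕ) (x y : Fin n → ℚ) :
    stdDot n x (-y) = - stdDot n x y := by
  have := stdDot_smul_right n (-1) x y
  simpa using this

lemma stdDot_sub_right (n : ℕ) (x y z : Fin n → ℚ) :
    stdDot n x (y - z) = stdDot n x y - stdDot n x z := by
  rw [sub_eq_add_neg, stdDot_add_right, stdDot_neg_right, sub_eq_add_neg]

lemma stdDot_sub_left (n : ℕ) (x y z : Fin n → ℚ) :
    stdDot n (x - y) z = stdDot n x z - stdDot n y z := by
  rw [stdDot_comm, stdDot_sub_right, stdDot_comm n x z, stdDot_comm n y z]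

/-- Lemmas about index-two subgroups. -/
lemma IndexTwo.double_mem {D L : Submodule ℤ V} (h : IndexTwo D L) {x : V} (hx : x ∈ L) :
    x + x ∈ D := by
  obtain ⟨hle, a, haL, haD, hco⟩ := h
  rcases hco x hx with hxD | hxa
  · exact D.add_mem hxD hxD
  · have h2a : a + a ∈ D := by
      rcases hco (a + a) (L.add_mem haL haL) with h' | h'
      · exact h'
      · exact absurd (by simpa using h') haD
    have : (x - a) + (x - a) + (a + a) ∈ D := D.add_mem (D.add_mem hxa hxa) h2a
    have hrw : (x - a) + (x - a) + (a + a) = x + x := by abel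
    rwa [hrw] at this

lemma IndexTwo.sub_mem_of_not_mem {D L : Submodule ℤ V} (h : IndexTwo D L) {x y : V}
    (hx : x ∈ L) (hy : y ∈ L) (hxD : x ∉ D) (hyD : y ∉ D) : x - y ∈ D := by
  obtain ⟨hle, a, haL, haD, hco⟩ := h
  have hxa : x - a ∈ D := by
    rcases hco x hx with h' | h'
    · exact absurd h' hxD
    · exact h'
  have hya : y - a ∈ D := by
    rcases hco y hy with h' | h'
    · exact absurd h' hyD
    · exact h'
  have : (x - a) - (y - a) ∈ D := D.sub_mem hxa hya
  simpa using this

lemma IndexTwo.mem_of_add_mem {D L : Submodule ℤ V} (_h : IndexTwo D L) {x y : V}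
    (hx : x ∈ D) (hxy : x + y ∈ D) : y ∈ D := by
  have : x + y - x ∈ D := D.sub_mem hxy hx
  simpa using this

/-- integrality of pairings within an integral lattice -/
lemma pair_int {B : V →ₗ[ℚ] V →ₗ[ℚ] ℚ} {L : Submodule ℤ V} (hL : IsIntegralLattice B L)
    {v w : V} (hv : v ∈ L) (hw : w ∈ L) : ∃ n : ℤ, B v w = n :=
  hL.integral hv w hw

/-- A vector of an odd Niemeier lattice with even norm lies in any even neighbor. -/
lemma even_mem_neighbor {B : V →ₗ[ℚ] V →ₗ[ℚ] ℚ} (hBs : ∀ x y, B x y = B y x)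
    {N E : Submodule ℤ V} (hN : IsOddNiemeier B N) (hE : IsEvenNeighbor B N E)
    {v : V} (hv : v ∈ N) (hev : ∃ n : ℤ, B v v = 2 * n) : v ∈ E := by
  obtain ⟨hNlat, hNuni, hNodd, _⟩ := hN
  obtain ⟨hElat, hEuni, hEev, hnb⟩ := hE
  obtain ⟨hD1, hD2⟩ := hnb
  -- D := N ⊓ E has index two in N
  obtain ⟨w, hwN, m, hwm⟩ := hNodd
  have hwD : w ∉ N ⊓ E := by
    intro hw
    obtain ⟨k, hk⟩ := hEev w hw.2
    rw [hwm] at hk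
    have : (2 * m + 1 : ℚ) = 2 * k := by exact_mod_cast hk
    have : (2 * m + 1 : ℤ) = 2 * k := by exact_mod_cast this
    omega
  by_contra hvE
  have hvD : v ∉ N ⊓ E := fun hmem => hvE hmem.2
  have hsub : v - w ∈ N ⊓ E := hD1.sub_mem_of_not_mem hv hwN hvD hwD
  -- v - w has even norm since it is in E; but computing gives odd
  obtain ⟨k, hk⟩ := hEev _ hsub.2
  obtain ⟨n, hn⟩ := hev
  obtain ⟨q, hq⟩ := pair_int hNlat hv hwN
  have hexp : B (v - w) (v - w) = B v v - 2 * B v w + B w w := by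
    have h1 := hBs w v
    simp only [map_sub, LinearMap.sub_apply]
    rw [h1]; ring
  rw [hk, hn, hq, hwm] at hexp
  have : (2 * k : ℤ) = 2 * n - 2 * q + (2 * m + 1) := by exact_mod_cast hexp
  omega

/-- A vector of odd norm cannot lie in an even lattice. -/
lemma odd_not_mem_even {B : V →ₗ[ℚ] V →ₗ[ℚ] ℚ} {E : Submodule ℤ V}
    (hEev : IsEvenLat B E) {v : V} (hv : ∃ n : ℤ, B v v = 2 * n + 1) : v ∉ E := by
  intro hmem
  obtain ⟨k, hk⟩ := hEev v hmem
  obtain ⟨n, hn⟩ := hv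
  rw [hn] at hk
  have : (2 * n + 1 : ℤ) = 2 * k := by exact_mod_cast hk
  omega

lemma sum_sv (n : ℕ) (i : Fin n) : ∑ j, sv n i j = 1 := by
  unfold sv
  rw [Finset.sum_eq_single i] <;> simp

lemma stdDot_sv_sv (n : ℕ) (i j : Fin n) :
    stdDot n (sv n i) (sv n j) = if j = i then 1 else 0 := by
  rw [stdDot_sv]; rfl

lemma intvec_sv {n : ℕ} (p : Fin n) : IsIntVec (sv n p) := by
  intro i
  by_cases hp : i = p
  · exact ⟨1, by simp [sv, hp]⟩
  · exact ⟨0, by simp [sv, hp]⟩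

lemma intvec_add {n : ℕ} {x y : Fin n → ℚ} (hx : IsIntVec x) (hy : IsIntVec y) :
    IsIntVec (x + y) := by
  intro i
  obtain ⟨a, ha⟩ := hx i
  obtain ⟨b, hb⟩ := hy i
  exact ⟨a + b, by simp [ha, hb]⟩

lemma intvec_neg {n : ℕ} {x : Fin n → ℚ} (hx : IsIntVec x) : IsIntVec (-x) := by
  intro i
  obtain ⟨a, ha⟩ := hx i
  exact ⟨-a, by simp [ha]⟩

lemma intvec_sub {n : ℕ} {x y : Fin n → ℚ} (hx : IsIntVec x) (hy : IsIntVec y) :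
    IsIntVec (x - y) := by
  rw [sub_eq_add_neg]; exact intvec_add hx (intvec_neg hy)

lemma svdiff_mem_latA (p q : Fin 25) : sv 25 p - sv 25 q ∈ latA 24 := by
  constructor
  · exact intvec_sub (intvec_sv p) (intvec_sv q)
  · have : ∑ i, (sv 25 p - sv 25 q) i = (∑ i, sv 25 p i) - ∑ i, sv 25 q i := by
      simp [Finset.sum_sub_distrib]
    rw [this, sum_sv, sum_sv]; ring

lemma svdiff_mem_latD (p q : Fin 24) : sv 24 p - sv 24 q ∈ latD 24 := by
  refine ⟨intvec_sub (intvec_sv p) (intvec_sv q), 0, ?_⟩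
  have : ∑ i, (sv 24 p - sv 24 q) i = (∑ i, sv 24 p i) - ∑ i, sv 24 q i := by
    simp [Finset.sum_sub_distrib]
  rw [this, sum_sv, sum_sv]; ring

lemma svsum_mem_latD (p q : Fin 24) : sv 24 p + sv 24 q ∈ latD 24 := by
  refine ⟨intvec_add (intvec_sv p) (intvec_sv q), 1, ?_⟩
  have : ∑ i, (sv 24 p + sv 24 q) i = (∑ i, sv 24 p i) + ∑ i, sv 24 q i := by
    simp [Finset.sum_add_distrib]
  rw [this, sum_sv, sum_sv]; norm_num

/-- an integer vector with sum of squares 2 has exactly two nonzero entries, which are `±1`. -/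
lemma int_norm_two {n : ℕ} (w : Fin n → ℤ) (h : ∑ i, w i * w i = 2) :
    ∃ p q, p ≠ q ∧ (w p = 1 ∨ w p = -1) ∧ (w q = 1 ∨ w q = -1) ∧
      ∀ j, j ≠ p → j ≠ q → w j = 0 := by
  have hnn : ∀ j ∈ Finset.univ, 0 ≤ w j * w j := fun j _ => mul_self_nonneg _
  have hval : ∀ j : Fin n, w j = -1 ∨ w j = 0 ∨ w j = 1 := by
    intro j
    have hb : w j * w j ≤ 2 := by
      calc w j * w j ≤ ∑ i, w i * w i :=
            Finset.single_le_sum hnn (Finset.mem_univ j)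
        _ = 2 := h
    have h1 : -1 ≤ w j := by nlinarith
    have h2 : w j ≤ 1 := by nlinarith
    omega
  classical
  set P := Finset.univ.filter (fun j => w j ≠ 0) with hP
  have hsum : ∑ j ∈ P, w j * w j = 2 := by
    rw [hP, Finset.sum_filter_of_ne]
    · exact h
    · intro j _ hj h0
      rw [h0] at hj; simp at hj
  have hone : ∀ j ∈ P, w j * w j = 1 := by
    intro j hj
    have hj0 : w j ≠ 0 := (Finset.mem_filter.mp hj).2
    rcases hval j with h' | h' | h' <;> simp [h'] at hj0 ⊢
  have hcard : P.card = 2 := by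
    rw [Finset.sum_congr rfl hone] at hsum
    have h2c : (P.card : ℤ) = 2 := by simpa using hsum
    exact_mod_cast h2c
  obtain ⟨p, q, hpq, hPpq⟩ := Finset.card_eq_two.mp hcard
  refine ⟨p, q, hpq, ?_, ?_, ?_⟩
  · have hp : p ∈ P := by rw [hPpq]; simp
    have := (Finset.mem_filter.mp hp).2
    rcases hval p with h' | h' | h' <;> simp [h'] at this ⊢
  · have hq : q ∈ P := by rw [hPpq]; simp
    have := (Finset.mem_filter.mp hq).2
    rcases hval q with h' | h' | h' <;> simp [h'] at this ⊢
  · intro j hjp hjq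
    by_contra h0
    have : j ∈ P := Finset.mem_filter.mpr ⟨Finset.mem_univ _, h0⟩
    rw [hPpq] at this
    simp [hjp, hjq] at this

/-- gets integer coordinates for a vector with `IsIntVec`. -/
lemma exists_int_rep {n : ℕ} {x : Fin n → ℚ} (hx : IsIntVec x) :
    ∃ w : Fin n → ℤ, ∀ i, x i = (w i : ℚ) := by
  choose w hw using hx
  exact ⟨w, hw⟩

lemma stdDot_self_int {n : ℕ} {x : Fin n → ℚ} {w : Fin n → ℤ} (hw : ∀ i, x i = (w i : ℚ)) :
    stdDot n x x = ((∑ i, w i * w i : ℤ) : ℚ) := by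
  unfold stdDot
  push_cast
  exact Finset.sum_congr rfl (fun i _ => by rw [hw i])

/-- expressing a two-entry vector as a combination of standard basis vectors -/
lemma two_entry_eq {n : ℕ} {p q : Fin n} (hpq : p ≠ q) (a b : ℚ) (z : Fin n → ℚ)
    (h : ∀ j, z j = (if j = p then a else 0) + (if j = q then b else 0)) :
    z = a • sv n p + b • sv n q := by
  funext j
  rw [h j]
  by_cases hjp : j = p
  · subst hjp
    rw [if_pos rfl, if_neg (by intro hc; exact hpq hc)]
    simp [sv, hpq]
  · by_cases hjq : j = q
    · subst hjq
      rw [if_neg hjp, if_pos rfl]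
      simp [sv, hjp]
    · rw [if_neg hjp, if_neg hjq]
      simp [sv, hjp, hjq]

/-- classification of norm-2 vectors of `latA 24` -/
lemma normTwo_latA {z : Fin 25 → ℚ} (hz : z ∈ latA 24) (h2 : stdDot 25 z z = 2) :
    ∃ p q, p ≠ q ∧ z = sv 25 p - sv 25 q := by
  obtain ⟨w, hw⟩ := exists_int_rep hz.1
  have hwsum : ∑ i, w i = 0 := by
    have : ((∑ i, w i : ℤ) : ℚ) = 0 := by
      push_cast
      rw [← hz.2]
      exact Finset.sum_congr rfl (fun i _ => (hw i).symm)
    exact_mod_cast this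
  have h2' : ∑ i, w i * w i = 2 := by
    have := stdDot_self_int hw
    rw [h2] at this
    exact_mod_cast this.symm
  obtain ⟨p, q, hpq, hp, hq, hrest⟩ := int_norm_two w h2'
  have key : ∀ (a b : ℤ), w p = a → w q = b →
      (∀ j, z j = (if j = p then (a:ℚ) else 0) + (if j = q then (b:ℚ) else 0)) := by
    intro a b ha hb j
    by_cases hjp : j = p
    · subst hjp
      rw [if_pos rfl, if_neg (fun hc => hpq hc), hw j, ha, add_zero]
    · by_cases hjq : j = q
      · subst hjq
        rw [if_neg hjp, if_pos rfl, hw j, hb, zero_add]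
      · rw [if_neg hjp, if_neg hjq, hw j, hrest j hjp hjq]
        norm_num
  have hsum2 : w p + w q = 0 := by
    have : ∑ i, w i = w p + w q := by
      rw [← Finset.sum_filter_of_ne (p := fun j => j = p ∨ j = q)]
      · have huniv : Finset.univ.filter (fun j => j = p ∨ j = q) = {p, q} := by
          ext j; simp
        rw [huniv, Finset.sum_insert (by simp [hpq]), Finset.sum_singleton]
      · intro j _ hj
        by_contra hc
        push_neg at hc
        exact hj (hrest j hc.1 hc.2)
    omega
  rcases hp with hp1 | hp1
  · have hq1 : w q = -1 := by omega
    refine ⟨p, q, hpq, ?_⟩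
    have := two_entry_eq hpq 1 (-1) z (by simpa using key 1 (-1) hp1 hq1)
    rw [this]
    funext j
    simp [sub_eq_add_neg]
  · have hq1 : w q = 1 := by omega
    refine ⟨q, p, Ne.symm hpq, ?_⟩
    have := two_entry_eq hpq (-1) 1 z (by simpa using key (-1) 1 hp1 hq1)
    rw [this]
    funext j
    simp [sub_eq_add_neg]
    ring

/-- classification of norm-2 vectors of `latD 24` -/
lemma normTwo_latD {z : Fin 24 → ℚ} (hz : z ∈ latD 24) (h2 : stdDot 24 z z = 2) :
    (∃ p q, p ≠ q ∧ z = sv 24 p - sv 24 q) ∨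
    (∃ p q, p ≠ q ∧ z = -(sv 24 p + sv 24 q)) ∨
    (∃ p q, p ≠ q ∧ z = sv 24 p + sv 24 q) := by
  obtain ⟨w, hw⟩ := exists_int_rep hz.1
  have h2' : ∑ i, w i * w i = 2 := by
    have := stdDot_self_int hw
    rw [h2] at this
    exact_mod_cast this.symm
  obtain ⟨p, q, hpq, hp, hq, hrest⟩ := int_norm_two w h2'
  have key : ∀ (a b : ℤ), w p = a → w q = b →
      (∀ j, z j = (if j = p then (a:ℚ) else 0) + (if j = q then (b:ℚ) else 0)) := by
    intro a b ha hb j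
    by_cases hjp : j = p
    · subst hjp
      rw [if_pos rfl, if_neg (fun hc => hpq hc), hw j, ha, add_zero]
    · by_cases hjq : j = q
      · subst hjq
        rw [if_neg hjp, if_pos rfl, hw j, hb, zero_add]
      · rw [if_neg hjp, if_neg hjq, hw j, hrest j hjp hjq]
        norm_num
  rcases hp with hp1 | hp1 <;> rcases hq with hq1 | hq1
  · refine Or.inr (Or.inr ⟨p, q, hpq, ?_⟩)
    have := two_entry_eq hpq 1 1 z (by simpa using key 1 1 hp1 hq1)
    rw [this]; funext j; simp
  · refine Or.inl ⟨p, q, hpq, ?_⟩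
    have := two_entry_eq hpq 1 (-1) z (by simpa using key 1 (-1) hp1 hq1)
    rw [this]; funext j; simp [sub_eq_add_neg]
  · refine Or.inl ⟨q, p, Ne.symm hpq, ?_⟩
    have := two_entry_eq hpq (-1) 1 z (by simpa using key (-1) 1 hp1 hq1)
    rw [this]; funext j; simp [sub_eq_add_neg]; ring
  · refine Or.inr (Or.inl ⟨p, q, hpq, ?_⟩)
    have := two_entry_eq hpq (-1) (-1) z (by simpa using key (-1) (-1) hp1 hq1)
    rw [this]; funext j; simp; ring

/-- the standard `ℤ`-basis vectors of `latA 24` -/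
def uvec (i : Fin 24) : Fin 25 → ℚ := sv 25 (Fin.castSucc i) - sv 25 (Fin.succ i)

lemma uvec_mem (i : Fin 24) : uvec i ∈ latA 24 :=
  svdiff_mem_latA _ _

lemma sv_sub_last_mem_span (j : Fin 25) :
    sv 25 j - sv 25 (Fin.last 24) ∈ Submodule.span ℤ (Set.range uvec) := by
  induction j using Fin.reverseInduction with
  | last => simp
  | cast i ih =>
    have heq : sv 25 (Fin.castSucc i) - sv 25 (Fin.last 24) =
        uvec i + (sv 25 (Fin.succ i) - sv 25 (Fin.last 24)) := by
      unfold uvec; abel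
    rw [heq]
    exact Submodule.add_mem _ (Submodule.subset_span ⟨i, rfl⟩) ih

lemma latA_le_span : latA 24 ≤ Submodule.span ℤ (Set.range uvec) := by
  intro x hx
  obtain ⟨w, hw⟩ := exists_int_rep hx.1
  have hwsum : ∑ i, w i = 0 := by
    have : ((∑ i, w i : ℤ) : ℚ) = 0 := by
      push_cast
      rw [← hx.2]
      exact Finset.sum_congr rfl (fun i _ => (hw i).symm)
    exact_mod_cast this
  have hxid : x = ∑ j, w j • (sv 25 j - sv 25 (Fin.last 24)) := by
    funext k
    rw [Finset.sum_apply]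
    have hterm : ∀ j, (w j • (sv 25 j - sv 25 (Fin.last 24))) k
        = (w j : ℚ) * sv 25 j k - (w j : ℚ) * sv 25 (Fin.last 24) k := by
      intro j
      simp [sub_mul, mul_sub]
    rw [Finset.sum_congr rfl (fun j _ => hterm j), Finset.sum_sub_distrib]
    have h1 : ∑ j, (w j : ℚ) * sv 25 j k = (w k : ℚ) := by
      rw [Finset.sum_eq_single k]
      · simp [sv]
      · intro b _ hb
        simp [sv, Ne.symm hb]
      · simp
    have h2 : ∑ j, (w j : ℚ) * sv 25 (Fin.last 24) k = 0 := by
      rw [← Finset.sum_mul]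
      have hc : ((∑ j, w j : ℤ) : ℚ) = 0 := by exact_mod_cast hwsum
      push_cast at hc
      rw [hc, zero_mul]
    rw [h1, h2, sub_zero, hw k]
  rw [hxid]
  exact Submodule.sum_mem _ (fun j _ => Submodule.smul_mem _ _ (sv_sub_last_mem_span j))

lemma stdDot_sum_left {n : ℕ} {ι : Type*} (s : Finset ι) (c : ι → ℚ) (x : ι → Fin n → ℚ)
    (y : Fin n → ℚ) :
    stdDot n (∑ i ∈ s, c i • x i) y = ∑ i ∈ s, c i * stdDot n (x i) y := by
  unfold stdDot
  simp only [Finset.sum_apply, Pi.smul_apply, smul_eq_mul, Finset.sum_mul, Finset.mul_sum]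
  rw [Finset.sum_comm]
  exact Finset.sum_congr rfl fun i _ => Finset.sum_congr rfl fun j _ => by ring

lemma stdDot_sum_right {n : ℕ} {ι : Type*} (s : Finset ι) (c : ι → ℚ) (x : ι → Fin n → ℚ)
    (y : Fin n → ℚ) :
    stdDot n y (∑ i ∈ s, c i • x i) = ∑ i ∈ s, c i * stdDot n y (x i) := by
  rw [stdDot_comm, stdDot_sum_left]
  exact Finset.sum_congr rfl (fun i _ => by rw [stdDot_comm])

lemma bilin_expand {B : V →ₗ[ℚ] V →ₗ[ℚ] ℚ} {ι : Type*} (s : Finset ι) (c d : ι → ℚ)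
    (x y : ι → V) :
    B (∑ i ∈ s, c i • x i) (∑ j ∈ s, d j • y j)
      = ∑ i ∈ s, ∑ j ∈ s, c i * (d j * B (x i) (y j)) := by
  have h1 : B (∑ i ∈ s, c i • x i) = ∑ i ∈ s, c i • B (x i) := by
    rw [map_sum]
    exact Finset.sum_congr rfl fun i _ => map_smul B (c i) (x i)
  rw [h1, LinearMap.sum_apply]
  refine Finset.sum_congr rfl fun i _ => ?_
  rw [LinearMap.smul_apply, map_sum, Finset.smul_sum]
  refine Finset.sum_congr rfl fun j _ => ?_
  rw [map_smul]
  simp [smul_eq_mul]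

lemma uvec_indep : LinearIndependent ℚ uvec := by
  rw [Fintype.linearIndependent_iff]
  intro g hg
  have hco : ∀ j : Fin 25,
      (∑ i, g i * sv 25 (Fin.castSucc i) j) - (∑ i, g i * sv 25 (Fin.succ i) j) = 0 := by
    intro j
    have hgj := congrFun hg j
    rw [Finset.sum_apply] at hgj
    have hgj' : ∑ i, (g i • uvec i) j = 0 := by simpa using hgj
    rw [← Finset.sum_sub_distrib, ← hgj']
    refine Finset.sum_congr rfl (fun i _ => ?_)
    simp [uvec, mul_sub]
  have hA : ∀ (k : ℕ) (hk : k < 24) (hk' : k < 25),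
      ∑ i, g i * sv 25 (Fin.castSucc i) ⟨k, hk'⟩ = g ⟨k, hk⟩ := by
    intro k hk hk'
    rw [Finset.sum_eq_single ⟨k, hk⟩]
    · have h1 : sv 25 (Fin.castSucc ⟨k, hk⟩) ⟨k, hk'⟩ = 1 := by
        simp [sv, Fin.ext_iff]
      rw [h1, mul_one]
    · intro b _ hb
      have hne : (⟨k, hk'⟩ : Fin 25) ≠ Fin.castSucc b := by
        intro hc
        apply hb
        apply Fin.ext
        have := congrArg Fin.val hc
        simpa using this.symm
      simp [sv, hne]
    · simp
  have hB0 : ∀ (hk' : (0:ℕ) < 25), ∑ i, g i * sv 25 (Fin.succ i) ⟨0, hk'⟩ = 0 := by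
    intro hk'
    refine Finset.sum_eq_zero (fun b _ => ?_)
    have hne : sv 25 (Fin.succ b) ⟨0, hk'⟩ = 0 := by
      unfold sv
      rw [if_neg]
      intro hc
      have := congrArg Fin.val hc
      simp [Fin.val_succ] at this
    rw [hne, mul_zero]
  have hBs : ∀ (k : ℕ) (hk : k < 24) (hk' : k + 1 < 25),
      ∑ i, g i * sv 25 (Fin.succ i) ⟨k + 1, hk'⟩ = g ⟨k, hk⟩ := by
    intro k hk hk'
    rw [Finset.sum_eq_single ⟨k, hk⟩]
    · have h1 : sv 25 (Fin.succ ⟨k, hk⟩) ⟨k + 1, hk'⟩ = 1 := by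
        simp [sv, Fin.ext_iff]
      rw [h1, mul_one]
    · intro b _ hb
      have hne : sv 25 (Fin.succ b) ⟨k + 1, hk'⟩ = 0 := by
        unfold sv
        rw [if_neg]
        intro hc
        apply hb
        apply Fin.ext
        have hval := congrArg Fin.val hc
        simp only [Fin.val_succ] at hval
        show (b : ℕ) = k
        omega
      rw [hne, mul_zero]
    · simp
  have main : ∀ (k : ℕ) (hk : k < 24), g ⟨k, hk⟩ = 0 := by
    intro k
    induction k with
    | zero =>
      intro hk
      have := hco ⟨0, by omega⟩
      rw [hA 0 hk (by omega), hB0 (by omega)] at this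
      simpa using this
    | succ m ih =>
      intro hk
      have := hco ⟨m + 1, by omega⟩
      rw [hA (m+1) hk (by omega), hBs m (by omega) (by omega)] at this
      rw [ih (by omega)] at this
      simpa using this
  intro i
  have := main i.1 i.2
  simpa using this

section FMap

variable {B : V →ₗ[ℚ] V →ₗ[ℚ] ℚ} {E₂ : Submodule ℤ V}

/-- preimages of the standard basis of `latA 24` under the isometry -/
noncomputable def wv (f₂ : rootSublattice B E₂ ≃ₗ[ℤ] latA 24) (i : Fin 24) : V :=
  (f₂.symm ⟨uvec i, uvec_mem i⟩ : V)

lemma wv_mem_R (f₂ : rootSublattice B E₂ ≃ₗ[ℤ] latA 24) (i : Fin 24) :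
    wv f₂ i ∈ rootSublattice B E₂ := (f₂.symm _).2

lemma pb_pair (f₂ : rootSublattice B E₂ ≃ₗ[ℤ] latA 24)
    (hf₂ : ∀ x y : rootSublattice B E₂, stdDot 25 (f₂ x) (f₂ y) = B x y)
    (z z' : Fin 25 → ℚ) (hz : z ∈ latA 24) (hz' : z' ∈ latA 24) :
    B (f₂.symm ⟨z, hz⟩ : V) (f₂.symm ⟨z', hz'⟩ : V) = stdDot 25 z z' := by
  have := hf₂ (f₂.symm ⟨z, hz⟩) (f₂.symm ⟨z', hz'⟩)
  rw [LinearEquiv.apply_symm_apply, LinearEquiv.apply_symm_apply] at this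
  exact this.symm

lemma wv_gram (f₂ : rootSublattice B E₂ ≃ₗ[ℤ] latA 24)
    (hf₂ : ∀ x y : rootSublattice B E₂, stdDot 25 (f₂ x) (f₂ y) = B x y)
    (i j : Fin 24) : B (wv f₂ i) (wv f₂ j) = stdDot 25 (uvec i) (uvec j) :=
  pb_pair f₂ hf₂ _ _ _ _

lemma wv_indep (f₂ : rootSublattice B E₂ ≃ₗ[ℤ] latA 24)
    (hf₂ : ∀ x y : rootSublattice B E₂, stdDot 25 (f₂ x) (f₂ y) = B x y) :
    LinearIndependent ℚ (wv f₂) := by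
  rw [Fintype.linearIndependent_iff]
  intro g hg
  set t := ∑ i, g i • uvec i with ht
  have ht0 : stdDot 25 t t = 0 := by
    have hBt : B (∑ i, g i • wv f₂ i) (∑ j, g j • wv f₂ j) = 0 := by
      rw [hg]; simp
    have hexp := bilin_expand (B := B) Finset.univ g g (wv f₂) (wv f₂)
    have hexp2 : stdDot 25 t t = ∑ i, ∑ j, g i * (g j * stdDot 25 (uvec i) (uvec j)) := by
      rw [ht, stdDot_sum_left]
      refine Finset.sum_congr rfl (fun i _ => ?_)
      rw [stdDot_sum_right, Finset.mul_sum]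
    rw [hexp2, ← hBt, hexp]
    refine Finset.sum_congr rfl (fun i _ => Finset.sum_congr rfl (fun j _ => ?_))
    rw [wv_gram f₂ hf₂]
  have htz : t = 0 := by
    have hnn : ∀ j ∈ Finset.univ, (0:ℚ) ≤ t j * t j := fun j _ => mul_self_nonneg _
    have hz : ∀ j ∈ Finset.univ, t j * t j = 0 :=
      (Finset.sum_eq_zero_iff_of_nonneg hnn).mp ht0
    funext j
    exact mul_self_eq_zero.mp (hz j (Finset.mem_univ j))
  exact Fintype.linearIndependent_iff.mp uvec_indep g htz

/-- the basis of `V` coming from the preimages of the `latA 24` basis -/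
noncomputable def basW (f₂ : rootSublattice B E₂ ≃ₗ[ℤ] latA 24)
    (hf₂ : ∀ x y : rootSublattice B E₂, stdDot 25 (f₂ x) (f₂ y) = B x y)
    (hrank : Module.finrank ℚ V = 24) : Module.Basis (Fin 24) ℚ V :=
  basisOfLinearIndependentOfCardEqFinrank (wv_indep f₂ hf₂) (by simp [hrank])

lemma basW_apply (f₂ : rootSublattice B E₂ ≃ₗ[ℤ] latA 24)
    (hf₂ : ∀ x y : rootSublattice B E₂, stdDot 25 (f₂ x) (f₂ y) = B x y)
    (hrank : Module.finrank ℚ V = 24) (i : Fin 24) : basW f₂ hf₂ hrank i = wv f₂ i := by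
  simp [basW]

/-- the global linear extension of `f₂` -/
noncomputable def Fmap (f₂ : rootSublattice B E₂ ≃ₗ[ℤ] latA 24)
    (hf₂ : ∀ x y : rootSublattice B E₂, stdDot 25 (f₂ x) (f₂ y) = B x y)
    (hrank : Module.finrank ℚ V = 24) : V →ₗ[ℚ] (Fin 25 → ℚ) :=
  (basW f₂ hf₂ hrank).constr ℚ uvec

variable (f₂ : rootSublattice B E₂ ≃ₗ[ℤ] latA 24)
  (hf₂ : ∀ x y : rootSublattice B E₂, stdDot 25 (f₂ x) (f₂ y) = B x y)
  (hrank : Module.finrank ℚ V = 24)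

lemma Fmap_wv (i : Fin 24) : Fmap f₂ hf₂ hrank (wv f₂ i) = uvec i := by
  rw [← basW_apply f₂ hf₂ hrank]
  simp [Fmap]

lemma Fmap_repr (v : V) :
    Fmap f₂ hf₂ hrank v = ∑ i, (basW f₂ hf₂ hrank).repr v i • uvec i := by
  set bb := basW f₂ hf₂ hrank with hbb
  conv_lhs => rw [← Module.Basis.sum_repr bb v]
  rw [map_sum]
  refine Finset.sum_congr rfl (fun i _ => ?_)
  rw [map_smul, hbb, basW_apply f₂ hf₂ hrank, ← hbb, Fmap_wv]

lemma Fmap_pres (v w : V) :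
    stdDot 25 (Fmap f₂ hf₂ hrank v) (Fmap f₂ hf₂ hrank w) = B v w := by
  set bb := basW f₂ hf₂ hrank with hbb
  rw [Fmap_repr f₂ hf₂ hrank v, Fmap_repr f₂ hf₂ hrank w]
  have hL : stdDot 25 (∑ i, bb.repr v i • uvec i) (∑ j, bb.repr w j • uvec j)
      = ∑ i, ∑ j, bb.repr v i * (bb.repr w j * stdDot 25 (uvec i) (uvec j)) := by
    rw [stdDot_sum_left]
    refine Finset.sum_congr rfl (fun i _ => ?_)
    rw [stdDot_sum_right, Finset.mul_sum]
  rw [hL]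
  conv_rhs => rw [← Module.Basis.sum_repr bb v, ← Module.Basis.sum_repr bb w]
  rw [bilin_expand]
  refine Finset.sum_congr rfl (fun i _ => Finset.sum_congr rfl (fun j _ => ?_))
  rw [hbb, basW_apply f₂ hf₂ hrank, basW_apply f₂ hf₂ hrank, ← hbb, wv_gram f₂ hf₂]

lemma Fmap_pb (z : Fin 25 → ℚ) (hz : z ∈ latA 24) :
    Fmap f₂ hf₂ hrank ((f₂.symm ⟨z, hz⟩ : rootSublattice B E₂) : V) = z := by
  have hsp : z ∈ Submodule.span ℤ (Set.range uvec) := latA_le_span hz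
  have main : ∀ y ∈ Submodule.span ℤ (Set.range uvec),
      ∃ hy : y ∈ latA 24,
        Fmap f₂ hf₂ hrank ((f₂.symm ⟨y, hy⟩ : rootSublattice B E₂) : V) = y := by
    intro y hy
    refine Submodule.span_induction ?_ ?_ ?_ ?_ hy
    · rintro _ ⟨i, rfl⟩
      exact ⟨uvec_mem i, Fmap_wv f₂ hf₂ hrank i⟩
    · refine ⟨(latA 24).zero_mem, ?_⟩
      have h0 : (f₂.symm ⟨(0 : Fin 25 → ℚ), (latA 24).zero_mem⟩ : rootSublattice B E₂) = 0 := by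
        have : (⟨(0 : Fin 25 → ℚ), (latA 24).zero_mem⟩ : latA 24) = 0 := rfl
        rw [this, map_zero]
      rw [h0]
      simp
    · rintro x y _ _ ⟨hxm, hxe⟩ ⟨hym, hye⟩
      refine ⟨(latA 24).add_mem hxm hym, ?_⟩
      have hadd : ((f₂.symm ⟨x + y, (latA 24).add_mem hxm hym⟩ : rootSublattice B E₂) : V)
          = ((f₂.symm ⟨x, hxm⟩ : rootSublattice B E₂) : V)
            + ((f₂.symm ⟨y, hym⟩ : rootSublattice B E₂) : V) := by
        rw [show (⟨x + y, (latA 24).add_mem hxm hym⟩ : latA 24) = ⟨x, hxm⟩ + ⟨y, hym⟩ from rfl,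
          map_add]
        rfl
      rw [hadd, map_add, hxe, hye]
    · rintro a x _ ⟨hxm, hxe⟩
      refine ⟨(latA 24).smul_mem a hxm, ?_⟩
      have hsm : ((f₂.symm ⟨a • x, (latA 24).smul_mem a hxm⟩ : rootSublattice B E₂) : V)
          = a • ((f₂.symm ⟨x, hxm⟩ : rootSublattice B E₂) : V) := by
        rw [show (⟨a • x, (latA 24).smul_mem a hxm⟩ : latA 24) = a • (⟨x, hxm⟩ : latA 24) from rfl,
          map_smul]
        rfl
      rw [hsm, map_zsmul, hxe]
  obtain ⟨hy, he⟩ := main z hsp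
  exact he

lemma Fmap_pair (v : V) (z : Fin 25 → ℚ) (hz : z ∈ latA 24) :
    B v ((f₂.symm ⟨z, hz⟩ : rootSublattice B E₂) : V) = stdDot 25 (Fmap f₂ hf₂ hrank v) z := by
  rw [← Fmap_pres f₂ hf₂ hrank, Fmap_pb f₂ hf₂ hrank]

lemma Fmap_sum_coords (v : V) : ∑ p, Fmap f₂ hf₂ hrank v p = 0 := by
  rw [Fmap_repr f₂ hf₂ hrank v]
  set bb := basW f₂ hf₂ hrank
  have hap : ∀ p, (∑ i, bb.repr v i • uvec i) p = ∑ i, bb.repr v i * uvec i p := by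
    intro p
    rw [Finset.sum_apply]
    rfl
  rw [Finset.sum_congr rfl fun p _ => hap p, Finset.sum_comm]
  refine Finset.sum_eq_zero fun i _ => ?_
  rw [← Finset.mul_sum, (uvec_mem i).2, mul_zero]

end FMap


section PartitionCount

open Classical in
/-- Counting related ordered pairs for a two-class equivalence-like relation. -/
lemma partition_count {n : ℕ} (rel : Fin n → Fin n → Prop)
    (hsymm : ∀ p q, rel p q → rel q p)
    (hirr : ∀ p q, rel p q → p ≠ q)
    (htrans : ∀ p q r, rel p q → rel q r → p ≠ r → rel p r)
    (hdicho : ∀ i₁ p q, p ≠ i₁ → q ≠ i₁ → p ≠ q → ¬ rel p i₁ → ¬ rel q i₁ → rel p q)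
    (i₁ : Fin n) :
    ∃ S : Finset (Fin n), i₁ ∈ S ∧
      (∀ p q, p ≠ q → (rel p q ↔ ((p ∈ S ∧ q ∈ S) ∨ (p ∉ S ∧ q ∉ S)))) ∧
      (Finset.univ.offDiag.filter (fun pq => rel pq.1 pq.2)).card
        = (S.card * S.card - S.card) + ((n - S.card) * (n - S.card) - (n - S.card)) := by
  classical
  set S := Finset.univ.filter (fun p => p = i₁ ∨ rel p i₁) with hS
  have hi₁S : i₁ ∈ S := by simp [hS]
  have hmemS : ∀ p, p ∈ S ↔ (p = i₁ ∨ rel p i₁) := by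
    intro p; simp [hS]
  have hrel_iff : ∀ p q, p ≠ q → (rel p q ↔ ((p ∈ S ∧ q ∈ S) ∨ (p ∉ S ∧ q ∉ S))) := by
    intro p q hpq
    constructor
    · intro hr
      by_cases hpS : p ∈ S
      · left
        refine ⟨hpS, ?_⟩
        rcases (hmemS p).mp hpS with h1 | h1
        · subst h1
          exact (hmemS q).mpr (Or.inr (hsymm _ _ hr))
        · by_cases hqi : q = i₁
          · exact (hmemS q).mpr (Or.inl hqi)
          · exact (hmemS q).mpr (Or.inr (htrans _ _ _ (hsymm _ _ hr) h1 hqi))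
      · right
        refine ⟨hpS, ?_⟩
        intro hqS
        apply hpS
        rcases (hmemS q).mp hqS with h1 | h1
        · subst h1
          exact (hmemS p).mpr (Or.inr hr)
        · by_cases hpi : p = i₁
          · exact (hmemS p).mpr (Or.inl hpi)
          · exact (hmemS p).mpr (Or.inr (htrans _ _ _ hr h1 hpi))
    · rintro (⟨hpS, hqS⟩ | ⟨hpS, hqS⟩)
      · rcases (hmemS p).mp hpS with h1 | h1 <;> rcases (hmemS q).mp hqS with h2 | h2
        · exact absurd (h1.trans h2.symm) hpq
        · subst h1; exact hsymm _ _ h2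
        · subst h2; exact h1
        · exact htrans _ _ _ h1 (hsymm _ _ h2) hpq
      · have hpi : p ≠ i₁ := fun hc => hpS ((hmemS p).mpr (Or.inl hc))
        have hqi : q ≠ i₁ := fun hc => hqS ((hmemS q).mpr (Or.inl hc))
        have hpr : ¬ rel p i₁ := fun hc => hpS ((hmemS p).mpr (Or.inr hc))
        have hqr : ¬ rel q i₁ := fun hc => hqS ((hmemS q).mpr (Or.inr hc))
        exact hdicho i₁ p q hpi hqi hpq hpr hqr
  refine ⟨S, hi₁S, hrel_iff, ?_⟩
  have hsplit : Finset.univ.offDiag.filter (fun pq => rel pq.1 pq.2)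
      = S.offDiag ∪ Sᶜ.offDiag := by
    ext ⟨p, q⟩
    simp only [Finset.mem_filter, Finset.mem_offDiag, Finset.mem_union, Finset.mem_compl]
    constructor
    · rintro ⟨⟨_, _, hpq⟩, hr⟩
      rcases (hrel_iff p q hpq).mp hr with ⟨h1, h2⟩ | ⟨h1, h2⟩
      · exact Or.inl ⟨h1, h2, hpq⟩
      · exact Or.inr ⟨h1, h2, hpq⟩
    · rintro (⟨h1, h2, hpq⟩ | ⟨h1, h2, hpq⟩)
      · exact ⟨⟨Finset.mem_univ _, Finset.mem_univ _, hpq⟩,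
          (hrel_iff p q hpq).mpr (Or.inl ⟨h1, h2⟩)⟩
      · exact ⟨⟨Finset.mem_univ _, Finset.mem_univ _, hpq⟩,
          (hrel_iff p q hpq).mpr (Or.inr ⟨h1, h2⟩)⟩
  rw [hsplit, Finset.card_union_of_disjoint]
  · rw [Finset.offDiag_card, Finset.offDiag_card]
    congr 2
    · rw [Finset.card_compl]
      simp
    · rw [Finset.card_compl]
      simp
  · rw [Finset.disjoint_left]
    rintro ⟨p, q⟩ hp hq
    rw [Finset.mem_offDiag] at hp hq
    exact (Finset.mem_compl.mp hq.1) hp.1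

lemma dec_count_552 : ∀ a : ℕ, a ≤ 25 →
    (a * a - a) + ((25 - a) * (25 - a) - (25 - a)) = 552 → a = 1 ∨ a = 24 := by
  decide

lemma dec_count_tau0 : ∀ a : ℕ, a ≤ 25 → ∀ b : ℕ, b ≤ 24 →
    (a * a - a) + ((25 - a) * (25 - a) - (25 - a))
      ≠ 2 * ((b * b - b) + ((24 - b) * (24 - b) - (24 - b))) := by
  decide

end PartitionCount


section Relations

variable {B : V →ₗ[ℚ] V →ₗ[ℚ] ℚ} {N E₁ E₂ : Submodule ℤ V}

lemma rootSub_le (B : V →ₗ[ℚ] V →ₗ[ℚ] ℚ) (E : Submodule ℤ V) : rootSublattice B E ≤ E :=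
  Submodule.span_le.mpr (fun _ hv => hv.1)

lemma mem_rootSub {E : Submodule ℤ V} {v : V} (hv : v ∈ E) (h2 : B v v = 2) :
    v ∈ rootSublattice B E := Submodule.subset_span ⟨hv, h2⟩

/-- pullback of `e_p - e_q` under `f₂` -/
noncomputable def pbA (f₂ : rootSublattice B E₂ ≃ₗ[ℤ] latA 24) (p q : Fin 25) : V :=
  (f₂.symm ⟨sv 25 p - sv 25 q, svdiff_mem_latA p q⟩ : V)

/-- pullback of `e_p - e_q` under `f₁` -/
noncomputable def pbD (f₁ : rootSublattice B E₁ ≃ₗ[ℤ] latD 24) (p q : Fin 24) : V :=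
  (f₁.symm ⟨sv 24 p - sv 24 q, svdiff_mem_latD p q⟩ : V)

/-- pullback of `e_p + e_q` under `f₁` -/
noncomputable def pbDs (f₁ : rootSublattice B E₁ ≃ₗ[ℤ] latD 24) (p q : Fin 24) : V :=
  (f₁.symm ⟨sv 24 p + sv 24 q, svsum_mem_latD p q⟩ : V)

/-- pullback of `2 e_p` under `f₁` -/
noncomputable def pbT (f₁ : rootSublattice B E₁ ≃ₗ[ℤ] latD 24) (p : Fin 24) : V :=
  (f₁.symm ⟨sv 24 p + sv 24 p, svsum_mem_latD p p⟩ : V)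

def relA (f₂ : rootSublattice B E₂ ≃ₗ[ℤ] latA 24) (N : Submodule ℤ V) (p q : Fin 25) : Prop :=
  p ≠ q ∧ pbA f₂ p q ∈ N

def relQ (f₁ : rootSublattice B E₁ ≃ₗ[ℤ] latD 24) (N : Submodule ℤ V) (p q : Fin 24) : Prop :=
  p ≠ q ∧ pbD f₁ p q ∈ N

def relS (f₁ : rootSublattice B E₁ ≃ₗ[ℤ] latD 24) (N : Submodule ℤ V) (p q : Fin 24) : Prop :=
  p ≠ q ∧ pbDs f₁ p q ∈ N

/-- signed sum pullback, injective version -/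
noncomputable def pbSm (f₁ : rootSublattice B E₁ ≃ₗ[ℤ] latD 24) (p q : Fin 24) : V :=
  if p < q then pbDs f₁ p q else - pbDs f₁ p q

section PBLemmas

variable (f₂ : rootSublattice B E₂ ≃ₗ[ℤ] latA 24)
variable (f₁ : rootSublattice B E₁ ≃ₗ[ℤ] latD 24)

lemma pb_congr_A {z z' : Fin 25 → ℚ} (hz : z ∈ latA 24) (hz' : z' ∈ latA 24) (h : z = z') :
    (f₂.symm ⟨z, hz⟩ : V) = (f₂.symm ⟨z', hz'⟩ : V) := by
  subst h; rfl

lemma pb_add_A {z z' : Fin 25 → ℚ} (hz : z ∈ latA 24) (hz' : z' ∈ latA 24) :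
    (f₂.symm ⟨z + z', (latA 24).add_mem hz hz'⟩ : V)
      = (f₂.symm ⟨z, hz⟩ : V) + (f₂.symm ⟨z', hz'⟩ : V) := by
  rw [show (⟨z + z', (latA 24).add_mem hz hz'⟩ : latA 24) = ⟨z, hz⟩ + ⟨z', hz'⟩ from rfl, map_add]
  rfl

lemma pb_neg_A {z : Fin 25 → ℚ} (hz : z ∈ latA 24) :
    (f₂.symm ⟨-z, (latA 24).neg_mem hz⟩ : V) = - (f₂.symm ⟨z, hz⟩ : V) := by
  rw [show (⟨-z, (latA 24).neg_mem hz⟩ : latA 24) = -⟨z, hz⟩ from rfl, map_neg]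
  rfl

lemma pb_congr_D {z z' : Fin 24 → ℚ} (hz : z ∈ latD 24) (hz' : z' ∈ latD 24) (h : z = z') :
    (f₁.symm ⟨z, hz⟩ : V) = (f₁.symm ⟨z', hz'⟩ : V) := by
  subst h; rfl

lemma pb_add_D {z z' : Fin 24 → ℚ} (hz : z ∈ latD 24) (hz' : z' ∈ latD 24) :
    (f₁.symm ⟨z + z', (latD 24).add_mem hz hz'⟩ : V)
      = (f₁.symm ⟨z, hz⟩ : V) + (f₁.symm ⟨z', hz'⟩ : V) := by
  rw [show (⟨z + z', (latD 24).add_mem hz hz'⟩ : latD 24) = ⟨z, hz⟩ + ⟨z', hz'⟩ from rfl, map_add]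
  rfl

lemma pb_neg_D {z : Fin 24 → ℚ} (hz : z ∈ latD 24) :
    (f₁.symm ⟨-z, (latD 24).neg_mem hz⟩ : V) = - (f₁.symm ⟨z, hz⟩ : V) := by
  rw [show (⟨-z, (latD 24).neg_mem hz⟩ : latD 24) = -⟨z, hz⟩ from rfl, map_neg]
  rfl

lemma pbA_add (p q r : Fin 25) : pbA f₂ p q + pbA f₂ q r = pbA f₂ p r := by
  unfold pbA
  rw [← pb_add_A f₂]
  exact pb_congr_A f₂ _ _ (by abel)

lemma pbA_neg (p q : Fin 25) : pbA f₂ q p = - pbA f₂ p q := by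
  unfold pbA
  rw [← pb_neg_A f₂]
  exact pb_congr_A f₂ _ _ (by abel)

lemma pbD_add (p q r : Fin 24) : pbD f₁ p q + pbD f₁ q r = pbD f₁ p r := by
  unfold pbD
  rw [← pb_add_D f₁]
  exact pb_congr_D f₁ _ _ (by abel)

lemma pbD_neg (p q : Fin 24) : pbD f₁ q p = - pbD f₁ p q := by
  unfold pbD
  rw [← pb_neg_D f₁]
  exact pb_congr_D f₁ _ _ (by abel)

lemma pbDs_comm (p q : Fin 24) : pbDs f₁ p q = pbDs f₁ q p := by
  unfold pbDs
  exact pb_congr_D f₁ _ _ (by abel)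

lemma pbDs_eq_pbD_add_pbT (p q : Fin 24) : pbDs f₁ p q = pbD f₁ p q + pbT f₁ q := by
  unfold pbDs pbD pbT
  rw [← pb_add_D f₁]
  exact pb_congr_D f₁ _ _ (by abel)

lemma pbT_add_pbT (p q : Fin 24) : pbT f₁ p + pbT f₁ q = pbDs f₁ p q + pbDs f₁ p q := by
  unfold pbT pbDs
  rw [← pb_add_D f₁, ← pb_add_D f₁]
  exact pb_congr_D f₁ _ _ (by abel)

lemma pbA_mem_E₂ (p q : Fin 25) : pbA f₂ p q ∈ E₂ :=
  rootSub_le B E₂ (f₂.symm _).2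

lemma pbD_mem_E₁ (p q : Fin 24) : pbD f₁ p q ∈ E₁ :=
  rootSub_le B E₁ (f₁.symm _).2

lemma pbDs_mem_E₁ (p q : Fin 24) : pbDs f₁ p q ∈ E₁ :=
  rootSub_le B E₁ (f₁.symm _).2

lemma pbT_mem_E₁ (p : Fin 24) : pbT f₁ p ∈ E₁ :=
  rootSub_le B E₁ (f₁.symm _).2

lemma svdiff_dot {n : ℕ} {p q : Fin n} (hpq : p ≠ q) :
    stdDot n (sv n p - sv n q) (sv n p - sv n q) = 2 := by
  rw [stdDot_sub_left, stdDot_sub_right, stdDot_sub_right, stdDot_sv_sv, stdDot_sv_sv,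
    stdDot_sv_sv, stdDot_sv_sv]
  rw [if_pos rfl, if_pos rfl, if_neg (Ne.symm hpq), if_neg hpq]
  norm_num

lemma svsum_dot {n : ℕ} {p q : Fin n} (hpq : p ≠ q) :
    stdDot n (sv n p + sv n q) (sv n p + sv n q) = 2 := by
  rw [stdDot_add_left, stdDot_add_right, stdDot_add_right, stdDot_sv_sv, stdDot_sv_sv,
    stdDot_sv_sv, stdDot_sv_sv]
  rw [if_pos rfl, if_pos rfl, if_neg (Ne.symm hpq), if_neg hpq]
  norm_num

lemma pbA_norm (hf₂ : ∀ x y : rootSublattice B E₂, stdDot 25 (f₂ x) (f₂ y) = B x y)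
    {p q : Fin 25} (hpq : p ≠ q) : B (pbA f₂ p q) (pbA f₂ p q) = 2 := by
  unfold pbA
  rw [pb_pair f₂ hf₂, svdiff_dot hpq]

lemma pbD_pair (hf₁ : ∀ x y : rootSublattice B E₁, stdDot 24 (f₁ x) (f₁ y) = B x y)
    (z z' : Fin 24 → ℚ) (hz : z ∈ latD 24) (hz' : z' ∈ latD 24) :
    B (f₁.symm ⟨z, hz⟩ : V) (f₁.symm ⟨z', hz'⟩ : V) = stdDot 24 z z' := by
  have := hf₁ (f₁.symm ⟨z, hz⟩) (f₁.symm ⟨z', hz'⟩)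
  rw [LinearEquiv.apply_symm_apply, LinearEquiv.apply_symm_apply] at this
  exact this.symm

lemma pbD_norm (hf₁ : ∀ x y : rootSublattice B E₁, stdDot 24 (f₁ x) (f₁ y) = B x y)
    {p q : Fin 24} (hpq : p ≠ q) : B (pbD f₁ p q) (pbD f₁ p q) = 2 := by
  unfold pbD
  rw [pbD_pair f₁ hf₁, svdiff_dot hpq]

lemma pbDs_norm (hf₁ : ∀ x y : rootSublattice B E₁, stdDot 24 (f₁ x) (f₁ y) = B x y)
    {p q : Fin 24} (hpq : p ≠ q) : B (pbDs f₁ p q) (pbDs f₁ p q) = 2 := by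
  unfold pbDs
  rw [pbD_pair f₁ hf₁, svsum_dot hpq]

end PBLemmas

lemma svdiff_apply {n : ℕ} (p q j : Fin n) :
    (sv n p - sv n q) j = (if j = p then 1 else 0) - (if j = q then 1 else 0) := rfl

lemma svsum_apply {n : ℕ} (p q j : Fin n) :
    (sv n p + sv n q) j = (if j = p then 1 else 0) + (if j = q then 1 else 0) := rfl

lemma svdiff_eq_one {n : ℕ} {p q : Fin n} (hpq : p ≠ q) (j : Fin n) :
    (sv n p - sv n q) j = 1 ↔ j = p := by
  rw [svdiff_apply]
  by_cases h1 : j = p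
  · subst h1
    have h2 : ¬ j = q := fun hc => hpq hc
    simp [h2]
  · by_cases h2 : j = q
    · subst h2
      rw [if_neg (fun hc : j = p => hpq hc.symm)]
      constructor
      · intro hc; norm_num at hc
      · intro hc; exact absurd hc.symm hpq
    · simp [h1, h2]

lemma svdiff_eq_negone {n : ℕ} {p q : Fin n} (hpq : p ≠ q) (j : Fin n) :
    (sv n p - sv n q) j = -1 ↔ j = q := by
  rw [svdiff_apply]
  by_cases h2 : j = q
  · subst h2
    have h1 : ¬ j = p := fun hc => hpq hc.symm
    simp [h1]
  · by_cases h1 : j = p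
    · subst h1
      rw [if_neg (fun hc : j = q => hpq hc)]
      constructor
      · intro hc; norm_num at hc
      · intro hc; exact absurd hc hpq
    · simp [h1, h2]

lemma svsum_eq_one {n : ℕ} {p q : Fin n} (hpq : p ≠ q) (j : Fin n) :
    (sv n p + sv n q) j = 1 ↔ (j = p ∨ j = q) := by
  rw [svsum_apply]
  by_cases h1 : j = p
  · subst h1
    have h2 : ¬ j = q := fun hc => hpq hc
    simp [h2]
  · by_cases h2 : j = q
    · subst h2
      simp [if_neg (fun hc : j = p => h1 hc)]
    · simp [h1, h2]

lemma svsum_nonneg {n : ℕ} (p q j : Fin n) : (0:ℚ) ≤ (sv n p + sv n q) j := by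
  rw [svsum_apply]
  split_ifs <;> norm_num

/-- injectivity of `p q ↦ e_p - e_q` on distinct pairs -/
lemma svdiff_inj {n : ℕ} {p q p' q' : Fin n} (hpq : p ≠ q) (h' : p' ≠ q')
    (h : sv n p - sv n q = sv n p' - sv n q') : p = p' ∧ q = q' := by
  constructor
  · have h1 : (sv n p' - sv n q') p = 1 := by
      rw [← h]
      exact (svdiff_eq_one hpq p).mpr rfl
    exact (svdiff_eq_one h' p).mp h1
  · have h1 : (sv n p' - sv n q') q = -1 := by
      rw [← h]
      exact (svdiff_eq_negone hpq q).mpr rfl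
    exact (svdiff_eq_negone h' q).mp h1

/-- a sum vector is never equal to a difference vector -/
lemma svsum_ne_svdiff {n : ℕ} {p q p' q' : Fin n} (hpq : p ≠ q) (h' : p' ≠ q') :
    sv n p + sv n q ≠ sv n p' - sv n q' := by
  intro h
  have h1 : (sv n p' - sv n q') q' = -1 := (svdiff_eq_negone h' q').mpr rfl
  rw [← h] at h1
  have := svsum_nonneg p q q'
  rw [h1] at this
  norm_num at this

/-- injectivity of unordered sum vectors -/
lemma svsum_inj {n : ℕ} {p q p' q' : Fin n} (hpq : p ≠ q) (h' : p' ≠ q')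
    (h : sv n p + sv n q = sv n p' + sv n q') : (p = p' ∧ q = q') ∨ (p = q' ∧ q = p') := by
  have hp : (p = p' ∨ p = q') := by
    have h1 : (sv n p' + sv n q') p = 1 := by
      rw [← h]
      exact (svsum_eq_one hpq p).mpr (Or.inl rfl)
    exact (svsum_eq_one h' p).mp h1
  have hq : (q = p' ∨ q = q') := by
    have h1 : (sv n p' + sv n q') q = 1 := by
      rw [← h]
      exact (svsum_eq_one hpq q).mpr (Or.inr rfl)
    exact (svsum_eq_one h' q).mp h1
  rcases hp with hp1 | hp1 <;> rcases hq with hq1 | hq1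
  · exact absurd (hp1.trans hq1.symm) hpq
  · exact Or.inl ⟨hp1, hq1⟩
  · exact Or.inr ⟨hp1, hq1⟩
  · exact absurd (hp1.trans hq1.symm) hpq

end Relations


section CountMain

variable {B : V →ₗ[ℚ] V →ₗ[ℚ] ℚ} {N E₁ E₂ : Submodule ℤ V}

theorem special_index
    (hBs : ∀ x y, B x y = B y x)
    (hN : IsOddNiemeier B N)
    (hE₁ : IsEvenNeighbor B N E₁) (hE₂ : IsEvenNeighbor B N E₂)
    (f₁ : rootSublattice B E₁ ≃ₗ[ℤ] latD 24)
    (hf₁ : ∀ x y : rootSublattice B E₁, stdDot 24 (f₁ x) (f₁ y) = B x y)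
    (f₂ : rootSublattice B E₂ ≃ₗ[ℤ] latA 24)
    (hf₂ : ∀ x y : rootSublattice B E₂, stdDot 25 (f₂ x) (f₂ y) = B x y) :
    ∃ i₀ : Fin 25, (∀ p q, p ≠ i₀ → q ≠ i₀ → p ≠ q → relA f₂ N p q) ∧
      (∀ p, ¬ relA f₂ N p i₀) ∧ (∀ p, ¬ relA f₂ N i₀ p) := by
  classical
  -- relation properties for relA
  have symmA : ∀ p q, relA f₂ N p q → relA f₂ N q p := by
    rintro p q ⟨hpq, hm⟩
    exact ⟨hpq.symm, by rw [pbA_neg]; exact N.neg_mem hm⟩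
  have irrA : ∀ p q, relA f₂ N p q → p ≠ q := fun p q h => h.1
  have transA : ∀ p q r, relA f₂ N p q → relA f₂ N q r → p ≠ r → relA f₂ N p r := by
    rintro p q r ⟨hpq, hm⟩ ⟨hqr, hm'⟩ hpr
    exact ⟨hpr, by rw [← pbA_add f₂ p q r]; exact N.add_mem hm hm'⟩
  have dichoA : ∀ i₁ p q, p ≠ i₁ → q ≠ i₁ → p ≠ q →
      ¬ relA f₂ N p i₁ → ¬ relA f₂ N q i₁ → relA f₂ N p q := by
    intro i₁ p q hpi hqi hpq hnp hnq
    have hD := hE₂.2.2.2.2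
    have hv₁ : pbA f₂ p i₁ ∉ N ⊓ E₂ := by
      intro hmem
      exact hnp ⟨hpi, hmem.1⟩
    have hv₂ : pbA f₂ q i₁ ∉ N ⊓ E₂ := by
      intro hmem
      exact hnq ⟨hqi, hmem.1⟩
    have hsub := hD.sub_mem_of_not_mem (pbA_mem_E₂ f₂ p i₁) (pbA_mem_E₂ f₂ q i₁) hv₁ hv₂
    have heq : pbA f₂ p i₁ - pbA f₂ q i₁ = pbA f₂ p q := by
      rw [sub_eq_add_neg, ← pbA_neg f₂ q i₁, pbA_add]
    rw [heq] at hsub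
    exact ⟨hpq, hsub.1⟩
  -- relation properties for relQ
  have symmQ : ∀ p q, relQ f₁ N p q → relQ f₁ N q p := by
    rintro p q ⟨hpq, hm⟩
    exact ⟨hpq.symm, by rw [pbD_neg]; exact N.neg_mem hm⟩
  have irrQ : ∀ p q, relQ f₁ N p q → p ≠ q := fun p q h => h.1
  have transQ : ∀ p q r, relQ f₁ N p q → relQ f₁ N q r → p ≠ r → relQ f₁ N p r := by
    rintro p q r ⟨hpq, hm⟩ ⟨hqr, hm'⟩ hpr
    exact ⟨hpr, by rw [← pbD_add f₁ p q r]; exact N.add_mem hm hm'⟩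
  have dichoQ : ∀ i₁ p q, p ≠ i₁ → q ≠ i₁ → p ≠ q →
      ¬ relQ f₁ N p i₁ → ¬ relQ f₁ N q i₁ → relQ f₁ N p q := by
    intro i₁ p q hpi hqi hpq hnp hnq
    have hD := hE₁.2.2.2.2
    have hv₁ : pbD f₁ p i₁ ∉ N ⊓ E₁ := fun hmem => hnp ⟨hpi, hmem.1⟩
    have hv₂ : pbD f₁ q i₁ ∉ N ⊓ E₁ := fun hmem => hnq ⟨hqi, hmem.1⟩
    have hsub := hD.sub_mem_of_not_mem (pbD_mem_E₁ f₁ p i₁) (pbD_mem_E₁ f₁ q i₁) hv₁ hv₂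
    have heq : pbD f₁ p i₁ - pbD f₁ q i₁ = pbD f₁ p q := by
      rw [sub_eq_add_neg, ← pbD_neg f₁ q i₁, pbD_add]
    rw [heq] at hsub
    exact ⟨hpq, hsub.1⟩
  -- τ-constancy
  have hdouble : ∀ x ∈ E₁, x + x ∈ N := by
    intro x hx
    exact ((hE₁.2.2.2.2).double_mem hx).1
  have tconst : ∀ i j : Fin 24, (pbT f₁ i ∈ N ↔ pbT f₁ j ∈ N) := by
    intro i j
    have hsum : pbT f₁ i + pbT f₁ j ∈ N := by
      rw [pbT_add_pbT]
      exact hdouble _ (pbDs_mem_E₁ f₁ i j)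
    constructor
    · intro hi
      have : pbT f₁ i + pbT f₁ j - pbT f₁ i ∈ N := N.sub_mem hsum hi
      simpa using this
    · intro hj
      have : pbT f₁ i + pbT f₁ j - pbT f₁ j ∈ N := N.sub_mem hsum hj
      simpa using this
  -- the finsets
  set FA := Finset.univ.offDiag.filter (fun pq : Fin 25 × Fin 25 => relA f₂ N pq.1 pq.2) with hFA
  set FQ := Finset.univ.offDiag.filter (fun pq : Fin 24 × Fin 24 => relQ f₁ N pq.1 pq.2) with hFQ
  set FS := Finset.univ.offDiag.filter (fun pq : Fin 24 × Fin 24 => relS f₁ N pq.1 pq.2) with hFS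
  set RA := FA.image (fun pq => pbA f₂ pq.1 pq.2) with hRA
  set RQ := FQ.image (fun pq => pbD f₁ pq.1 pq.2) with hRQ
  set RS := FS.image (fun pq => pbSm f₁ pq.1 pq.2) with hRS
  -- injectivity
  have pbA_injOn : ∀ pq ∈ FA, ∀ pq' ∈ FA,
      pbA f₂ pq.1 pq.2 = pbA f₂ pq'.1 pq'.2 → pq = pq' := by
    rintro ⟨p, q⟩ hpq ⟨p', q'⟩ hpq' heq
    have h1 : p ≠ q := ((Finset.mem_filter.mp hpq).2).1
    have h2 : p' ≠ q' := ((Finset.mem_filter.mp hpq').2).1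
    unfold pbA at heq
    have := f₂.symm.injective (Subtype.coe_injective heq)
    have hval : sv 25 p - sv 25 q = sv 25 p' - sv 25 q' := congrArg Subtype.val this
    obtain ⟨e1, e2⟩ := svdiff_inj h1 h2 hval
    simp [e1, e2]
  have pbD_injOn : ∀ pq ∈ FQ, ∀ pq' ∈ FQ,
      pbD f₁ pq.1 pq.2 = pbD f₁ pq'.1 pq'.2 → pq = pq' := by
    rintro ⟨p, q⟩ hpq ⟨p', q'⟩ hpq' heq
    have h1 : p ≠ q := ((Finset.mem_filter.mp hpq).2).1
    have h2 : p' ≠ q' := ((Finset.mem_filter.mp hpq').2).1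
    unfold pbD at heq
    have := f₁.symm.injective (Subtype.coe_injective heq)
    have hval : sv 24 p - sv 24 q = sv 24 p' - sv 24 q' := congrArg Subtype.val this
    obtain ⟨e1, e2⟩ := svdiff_inj h1 h2 hval
    simp [e1, e2]
  have pbDs_val : ∀ p q : Fin 24, ∀ p' q' : Fin 24, p ≠ q → p' ≠ q' →
      pbDs f₁ p q = pbDs f₁ p' q' → (p = p' ∧ q = q') ∨ (p = q' ∧ q = p') := by
    intro p q p' q' h1 h2 heq
    unfold pbDs at heq
    have := f₁.symm.injective (Subtype.coe_injective heq)
    have hval : sv 24 p + sv 24 q = sv 24 p' + sv 24 q' := congrArg Subtype.val this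
    exact svsum_inj h1 h2 hval
  have pbDs_ne_neg : ∀ p q p' q' : Fin 24, p ≠ q → p' ≠ q' →
      pbDs f₁ p q ≠ - pbDs f₁ p' q' := by
    intro p q p' q' h1 h2 heq
    unfold pbDs at heq
    rw [← pb_neg_D f₁ (svsum_mem_latD p' q')] at heq
    have := f₁.symm.injective (Subtype.coe_injective heq)
    have hval : sv 24 p + sv 24 q = -(sv 24 p' + sv 24 q') := congrArg Subtype.val this
    have hval1 : (sv 24 p + sv 24 q) p = 1 := (svsum_eq_one h1 p).mpr (Or.inl rfl)
    have hcf := congrFun hval p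
    rw [hval1, Pi.neg_apply] at hcf
    have hnn := svsum_nonneg p' q' p
    linarith
  have pbSm_injOn : ∀ pq ∈ FS, ∀ pq' ∈ FS,
      pbSm f₁ pq.1 pq.2 = pbSm f₁ pq'.1 pq'.2 → pq = pq' := by
    rintro ⟨p, q⟩ hpq ⟨p', q'⟩ hpq' heq
    have h1 : p ≠ q := ((Finset.mem_filter.mp hpq).2).1
    have h2 : p' ≠ q' := ((Finset.mem_filter.mp hpq').2).1
    unfold pbSm at heq
    by_cases c1 : p < q
    · by_cases c2 : p' < q'
      · rw [if_pos c1, if_pos c2] at heq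
        rcases pbDs_val p q p' q' h1 h2 heq with ⟨e1, e2⟩ | ⟨e1, e2⟩
        · simp [Prod.ext_iff, e1, e2]
        · exfalso
          subst e1; subst e2
          exact absurd c2 (lt_asymm c1)
      · rw [if_pos c1, if_neg c2] at heq
        exact absurd heq (pbDs_ne_neg p q p' q' h1 h2)
    · by_cases c2 : p' < q'
      · rw [if_neg c1, if_pos c2] at heq
        exact absurd heq.symm (pbDs_ne_neg p' q' p q h2 h1)
      · rw [if_neg c1, if_neg c2] at heq
        have heq' := neg_inj.mp heq
        rcases pbDs_val p q p' q' h1 h2 heq' with ⟨e1, e2⟩ | ⟨e1, e2⟩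
        · simp [Prod.ext_iff, e1, e2]
        · exfalso
          have hq1 : q < p := lt_of_le_of_ne (not_lt.mp c1) h1.symm
          have hq2 : q' < p' := lt_of_le_of_ne (not_lt.mp c2) h2.symm
          subst e1; subst e2
          exact absurd hq2 (lt_asymm hq1)
  -- cardinalities via images
  have cardRA : RA.card = FA.card := Finset.card_image_of_injOn
    (fun x hx y hy => pbA_injOn x (by simpa using hx) y (by simpa using hy))
  have cardRQ : RQ.card = FQ.card := Finset.card_image_of_injOn
    (fun x hx y hy => pbD_injOn x (by simpa using hx) y (by simpa using hy))
  have cardRS : RS.card = FS.card := Finset.card_image_of_injOn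
    (fun x hx y hy => pbSm_injOn x (by simpa using hx) y (by simpa using hy))
  have hmin2 : ∀ v : V, B v v = 2 → (∃ n : ℤ, B v v = 2 * n) :=
    fun v h => ⟨1, by rw [h]; norm_num⟩
  -- characterization of RA
  have charRA : ∀ v : V, v ∈ RA ↔ (v ∈ N ∧ B v v = 2) := by
    intro v
    constructor
    · intro hv
      rw [hRA, Finset.mem_image] at hv
      obtain ⟨⟨p, q⟩, hmem, rfl⟩ := hv
      have hrel : relA f₂ N p q := (Finset.mem_filter.mp hmem).2
      exact ⟨hrel.2, pbA_norm f₂ hf₂ hrel.1⟩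
    · rintro ⟨hvN, hv2⟩
      have hvE : v ∈ E₂ := even_mem_neighbor hBs hN hE₂ hvN (hmin2 v hv2)
      have hvR : v ∈ rootSublattice B E₂ := mem_rootSub hvE hv2
      have hz2 : stdDot 25 ((f₂ ⟨v, hvR⟩ : latA 24) : Fin 25 → ℚ) (f₂ ⟨v, hvR⟩) = 2 := by
        rw [hf₂ ⟨v, hvR⟩ ⟨v, hvR⟩]; exact hv2
      obtain ⟨p, q, hpq, hzeq⟩ := normTwo_latA (f₂ ⟨v, hvR⟩).2 hz2
      have hback : pbA f₂ p q = v := by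
        unfold pbA
        have hsub : (⟨sv 25 p - sv 25 q, svdiff_mem_latA p q⟩ : latA 24) = f₂ ⟨v, hvR⟩ :=
          Subtype.ext hzeq.symm
        rw [hsub, LinearEquiv.symm_apply_apply]
      rw [hRA, Finset.mem_image]
      refine ⟨(p, q), ?_, hback⟩
      rw [Finset.mem_filter]
      exact ⟨Finset.mem_offDiag.mpr ⟨Finset.mem_univ _, Finset.mem_univ _, hpq⟩,
        ⟨hpq, by rw [hback]; exact hvN⟩⟩
  -- characterization of RQ ∪ RS
  have charRQS : ∀ v : V, v ∈ RQ ∪ RS ↔ (v ∈ N ∧ B v v = 2) := by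
    intro v
    constructor
    · intro hv
      rcases Finset.mem_union.mp hv with hv | hv
      · rw [hRQ, Finset.mem_image] at hv
        obtain ⟨⟨p, q⟩, hmem, rfl⟩ := hv
        have hrel : relQ f₁ N p q := (Finset.mem_filter.mp hmem).2
        exact ⟨hrel.2, pbD_norm f₁ hf₁ hrel.1⟩
      · rw [hRS, Finset.mem_image] at hv
        obtain ⟨⟨p, q⟩, hmem, rfl⟩ := hv
        have hrel : relS f₁ N p q := (Finset.mem_filter.mp hmem).2
        unfold pbSm
        by_cases c : p < q
        · rw [if_pos c]
          exact ⟨hrel.2, pbDs_norm f₁ hf₁ hrel.1⟩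
        · rw [if_neg c]
          refine ⟨N.neg_mem hrel.2, ?_⟩
          have hnn : B (-(pbDs f₁ p q)) (-(pbDs f₁ p q)) = B (pbDs f₁ p q) (pbDs f₁ p q) := by
            simp
          rw [show ((p,q).1 : Fin 24) = p from rfl, show ((p,q).2 : Fin 24) = q from rfl, hnn]
          exact pbDs_norm f₁ hf₁ hrel.1
    · rintro ⟨hvN, hv2⟩
      have hvE : v ∈ E₁ := even_mem_neighbor hBs hN hE₁ hvN (hmin2 v hv2)
      have hvR : v ∈ rootSublattice B E₁ := mem_rootSub hvE hv2
      have hz2 : stdDot 24 ((f₁ ⟨v, hvR⟩ : latD 24) : Fin 24 → ℚ) (f₁ ⟨v, hvR⟩) = 2 := by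
        rw [hf₁ ⟨v, hvR⟩ ⟨v, hvR⟩]; exact hv2
      rcases normTwo_latD (f₁ ⟨v, hvR⟩).2 hz2 with ⟨p, q, hpq, hzeq⟩ | ⟨p, q, hpq, hzeq⟩ |
        ⟨p, q, hpq, hzeq⟩
      · -- difference type
        refine Finset.mem_union.mpr (Or.inl ?_)
        have hback : pbD f₁ p q = v := by
          unfold pbD
          have hsub : (⟨sv 24 p - sv 24 q, svdiff_mem_latD p q⟩ : latD 24) = f₁ ⟨v, hvR⟩ :=
            Subtype.ext hzeq.symm
          rw [hsub, LinearEquiv.symm_apply_apply]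
        rw [hRQ, Finset.mem_image]
        refine ⟨(p, q), ?_, hback⟩
        rw [Finset.mem_filter]
        exact ⟨Finset.mem_offDiag.mpr ⟨Finset.mem_univ _, Finset.mem_univ _, hpq⟩,
          ⟨hpq, by rw [hback]; exact hvN⟩⟩
      · -- negative sum type
        refine Finset.mem_union.mpr (Or.inr ?_)
        have hback : - pbDs f₁ p q = v := by
          unfold pbDs
          rw [← pb_neg_D f₁ (svsum_mem_latD p q)]
          have hsub : (⟨-(sv 24 p + sv 24 q), (latD 24).neg_mem (svsum_mem_latD p q)⟩ : latD 24)
              = f₁ ⟨v, hvR⟩ := Subtype.ext hzeq.symm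
          rw [hsub, LinearEquiv.symm_apply_apply]
        have hDsN : pbDs f₁ p q ∈ N := by
          have : pbDs f₁ p q = -v := by rw [← hback, neg_neg]
          rw [this]; exact N.neg_mem hvN
        rw [hRS, Finset.mem_image]
        by_cases c : p < q
        · refine ⟨(q, p), ?_, ?_⟩
          · rw [Finset.mem_filter]
            refine ⟨Finset.mem_offDiag.mpr ⟨Finset.mem_univ _, Finset.mem_univ _, hpq.symm⟩,
              ⟨hpq.symm, ?_⟩⟩
            rw [pbDs_comm]
            exact hDsN
          · show pbSm f₁ q p = v
            unfold pbSm
            rw [if_neg (lt_asymm c), pbDs_comm f₁ q p, hback]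
        · refine ⟨(p, q), ?_, ?_⟩
          · rw [Finset.mem_filter]
            exact ⟨Finset.mem_offDiag.mpr ⟨Finset.mem_univ _, Finset.mem_univ _, hpq⟩,
              ⟨hpq, hDsN⟩⟩
          · show pbSm f₁ p q = v
            unfold pbSm
            rw [if_neg c, hback]
      · -- sum type
        refine Finset.mem_union.mpr (Or.inr ?_)
        have hback : pbDs f₁ p q = v := by
          unfold pbDs
          have hsub : (⟨sv 24 p + sv 24 q, svsum_mem_latD p q⟩ : latD 24) = f₁ ⟨v, hvR⟩ :=
            Subtype.ext hzeq.symm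
          rw [hsub, LinearEquiv.symm_apply_apply]
        rw [hRS, Finset.mem_image]
        by_cases c : p < q
        · refine ⟨(p, q), ?_, ?_⟩
          · rw [Finset.mem_filter]
            exact ⟨Finset.mem_offDiag.mpr ⟨Finset.mem_univ _, Finset.mem_univ _, hpq⟩,
              ⟨hpq, by rw [hback]; exact hvN⟩⟩
          · show pbSm f₁ p q = v
            unfold pbSm
            rw [if_pos c, hback]
        · have hqp : q < p := lt_of_le_of_ne (not_lt.mp c) hpq.symm
          refine ⟨(q, p), ?_, ?_⟩
          · rw [Finset.mem_filter]
            refine ⟨Finset.mem_offDiag.mpr ⟨Finset.mem_univ _, Finset.mem_univ _, hpq.symm⟩,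
              ⟨hpq.symm, ?_⟩⟩
            rw [pbDs_comm, hback]
            exact hvN
          · show pbSm f₁ q p = v
            unfold pbSm
            rw [if_pos hqp, pbDs_comm f₁ q p, hback]
  have RAQS : RA = RQ ∪ RS := by
    ext v
    rw [charRA v, ← charRQS v]
  -- disjointness of RQ and RS
  have pbD_ne_pbDs : ∀ p q p' q' : Fin 24, p ≠ q → p' ≠ q' →
      pbD f₁ p q ≠ pbDs f₁ p' q' := by
    intro p q p' q' h1 h2 heq
    unfold pbD pbDs at heq
    have := f₁.symm.injective (Subtype.coe_injective heq)
    have hval : sv 24 p - sv 24 q = sv 24 p' + sv 24 q' := congrArg Subtype.val this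
    exact svsum_ne_svdiff h2 h1 hval.symm
  have pbD_ne_negpbDs : ∀ p q p' q' : Fin 24, p ≠ q → p' ≠ q' →
      pbD f₁ p q ≠ - pbDs f₁ p' q' := by
    intro p q p' q' h1 h2 heq
    unfold pbD pbDs at heq
    rw [← pb_neg_D f₁ (svsum_mem_latD p' q')] at heq
    have := f₁.symm.injective (Subtype.coe_injective heq)
    have hval : sv 24 p - sv 24 q = -(sv 24 p' + sv 24 q') := congrArg Subtype.val this
    have h3 : (sv 24 p - sv 24 q) p = 1 := (svdiff_eq_one h1 p).mpr rfl
    have hcf := congrFun hval p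
    rw [h3, Pi.neg_apply] at hcf
    linarith [svsum_nonneg p' q' p]
  have disj : Disjoint RQ RS := by
    rw [Finset.disjoint_left]
    intro v hvQ hvS
    rw [hRQ, Finset.mem_image] at hvQ
    rw [hRS, Finset.mem_image] at hvS
    obtain ⟨⟨p, q⟩, hmem, hv1⟩ := hvQ
    obtain ⟨⟨p', q'⟩, hmem', hv2⟩ := hvS
    have h1 : p ≠ q := ((Finset.mem_filter.mp hmem).2).1
    have h2 : p' ≠ q' := ((Finset.mem_filter.mp hmem').2).1
    have heq : pbD f₁ p q = pbSm f₁ p' q' := by rw [hv1, hv2]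
    unfold pbSm at heq
    by_cases c : p' < q'
    · rw [if_pos c] at heq
      exact pbD_ne_pbDs p q p' q' h1 h2 heq
    · rw [if_neg c] at heq
      exact pbD_ne_negpbDs p q p' q' h1 h2 heq
  have hcards : FA.card = FQ.card + FS.card := by
    rw [← cardRA, RAQS, Finset.card_union_of_disjoint disj, cardRQ, cardRS]
  -- the τ dichotomy
  by_cases htau : pbT f₁ 0 ∈ N
  · -- τ = 0 : contradiction
    exfalso
    have hQS : ∀ p q : Fin 24, p ≠ q → (relS f₁ N p q ↔ relQ f₁ N p q) := by
      intro p q hpq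
      have ht : pbT f₁ q ∈ N := (tconst 0 q).mp htau
      have hds : pbDs f₁ p q = pbD f₁ p q + pbT f₁ q := pbDs_eq_pbD_add_pbT f₁ p q
      constructor
      · rintro ⟨_, hm⟩
        refine ⟨hpq, ?_⟩
        have hsub : pbDs f₁ p q - pbT f₁ q ∈ N := N.sub_mem hm ht
        rw [hds] at hsub
        simpa using hsub
      · rintro ⟨_, hm⟩
        exact ⟨hpq, by rw [hds]; exact N.add_mem hm ht⟩
    have hFSFQ : FS = FQ := by
      rw [hFS, hFQ]
      apply Finset.filter_congr
      rintro ⟨p, q⟩ hmem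
      have hpq : p ≠ q := (Finset.mem_offDiag.mp hmem).2.2
      simpa using hQS p q hpq
    obtain ⟨S, hiS, hiffA, hcardA⟩ := partition_count (relA f₂ N) symmA irrA transA dichoA 0
    obtain ⟨T, hiT, hiffQ, hcardQ⟩ := partition_count (relQ f₁ N) symmQ irrQ transQ dichoQ 0
    rw [← hFA] at hcardA
    rw [← hFQ] at hcardQ
    have hSle : S.card ≤ 25 := by
      have := Finset.card_le_univ S
      simpa using this
    have hTle : T.card ≤ 24 := by
      have := Finset.card_le_univ T
      simpa using this
    apply dec_count_tau0 S.card hSle T.card hTle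
    rw [← hcardA, ← hcardQ, hcards, hFSFQ]
    omega
  · -- τ = 1
    have htall : ∀ j, pbT f₁ j ∉ N := fun j hj => htau ((tconst 0 j).mpr hj)
    have hQS : ∀ p q : Fin 24, p ≠ q → (relS f₁ N p q ↔ ¬ relQ f₁ N p q) := by
      intro p q hpq
      have hds : pbDs f₁ p q = pbD f₁ p q + pbT f₁ q := pbDs_eq_pbD_add_pbT f₁ p q
      constructor
      · rintro ⟨_, hm⟩ ⟨_, hm'⟩
        apply htall q
        have hsub : pbDs f₁ p q - pbD f₁ p q ∈ N := N.sub_mem hm hm'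
        rw [hds] at hsub
        simpa using hsub
      · intro hnq
        refine ⟨hpq, ?_⟩
        by_contra hns
        have hD := hE₁.2.2.2.2
        have h1 : pbDs f₁ p q ∉ N ⊓ E₁ := fun hc => hns hc.1
        have h2 : pbD f₁ p q ∉ N ⊓ E₁ := fun hc => hnq ⟨hpq, hc.1⟩
        have hsub := hD.sub_mem_of_not_mem (pbDs_mem_E₁ f₁ p q) (pbD_mem_E₁ f₁ p q) h1 h2
        apply htall q
        have h3 : pbDs f₁ p q - pbD f₁ p q ∈ N := hsub.1
        rw [hds] at h3
        simpa using h3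
    have hFSnot : FS = Finset.univ.offDiag.filter (fun pq => ¬ relQ f₁ N pq.1 pq.2) := by
      rw [hFS]
      apply Finset.filter_congr
      rintro ⟨p, q⟩ hmem
      simpa using hQS p q (Finset.mem_offDiag.mp hmem).2.2
    have hoffcard : (Finset.univ.offDiag : Finset (Fin 24 × Fin 24)).card = 552 := by
      rw [Finset.offDiag_card]
      simp
    have hFScard : FS.card = 552 - FQ.card := by
      rw [hFSnot, Finset.filter_not, Finset.card_sdiff_of_subset (Finset.filter_subset _ _), hoffcard, hFQ]
    have hFQle : FQ.card ≤ 552 := by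
      calc FQ.card ≤ (Finset.univ.offDiag : Finset (Fin 24 × Fin 24)).card := by
            rw [hFQ]; exact Finset.card_filter_le _ _
        _ = 552 := hoffcard
    have hFA552 : FA.card = 552 := by
      rw [hcards, hFScard]; omega
    obtain ⟨S, hiS, hiffA, hcardA⟩ := partition_count (relA f₂ N) symmA irrA transA dichoA 0
    rw [← hFA] at hcardA
    have hSle : S.card ≤ 25 := by
      have := Finset.card_le_univ S
      simpa using this
    have hS124 : S.card = 1 ∨ S.card = 24 := by
      apply dec_count_552 S.card hSle
      rw [← hcardA, hFA552]
    rcases hS124 with hS1 | hS24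
    · obtain ⟨x, hx⟩ := Finset.card_eq_one.mp hS1
      have hnp : ∀ p, ¬ relA f₂ N p x := by
        intro p hrel
        have hpq := irrA _ _ hrel
        rcases (hiffA p x hpq).mp hrel with ⟨h1, _⟩ | ⟨_, h2⟩
        · rw [hx] at h1
          simp at h1
          exact hpq h1
        · rw [hx] at h2
          simp at h2
      refine ⟨x, ?_, hnp, fun p h => hnp p (symmA _ _ h)⟩
      intro p q hp hq hpq
      apply (hiffA p q hpq).mpr
      right
      constructor
      · rw [hx]
        simpa using hp
      · rw [hx]
        simpa using hq
    · have hcompl : Sᶜ.card = 1 := by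
        rw [Finset.card_compl, hS24]
        simp
      obtain ⟨x, hx⟩ := Finset.card_eq_one.mp hcompl
      have hmemS : ∀ p, p ≠ x → p ∈ S := by
        intro p hp
        by_contra hc
        have hcc : p ∈ Sᶜ := Finset.mem_compl.mpr hc
        rw [hx] at hcc
        simp at hcc
        exact hp hcc
      have hxS : x ∉ S := by
        have hcc : x ∈ Sᶜ := by rw [hx]; simp
        exact Finset.mem_compl.mp hcc
      have hnp : ∀ p, ¬ relA f₂ N p x := by
        intro p hrel
        have hpq := irrA _ _ hrel
        rcases (hiffA p x hpq).mp hrel with ⟨_, h2⟩ | ⟨h1, _⟩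
        · exact hxS h2
        · exact h1 (hmemS p hpq)
      refine ⟨x, ?_, hnp, fun p h => hnp p (symmA _ _ h)⟩
      intro p q hp hq hpq
      apply (hiffA p q hpq).mpr
      left
      exact ⟨hmemS p hp, hmemS q hq⟩

end CountMain


section ClassLemma

/-- quadratic term facts for integers congruent mod 10 -/
lemma qaux (y c : ℤ) (h : ∃ k : ℤ, y = c + 10 * k) :
    0 ≤ (y - c) * (y - c + 10) ∧
      ((y - c) * (y - c + 10) = 0 ∨ 200 ≤ (y - c) * (y - c + 10)) := by
  obtain ⟨k, rfl⟩ := h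
  have he : (c + 10 * k - c) * (c + 10 * k - c + 10) = 100 * (k * (k + 1)) := by ring
  rw [he]
  have hk : k ≤ -2 ∨ k = -1 ∨ k = 0 ∨ 1 ≤ k := by omega
  rcases hk with hk | hk | hk | hk
  · constructor
    · nlinarith
    · right; nlinarith
  · subst hk; norm_num
  · subst hk; norm_num
  · constructor
    · nlinarith
    · right; nlinarith

lemma class_lemma (Y : Fin 25 → ℤ) (i₀ : Fin 25)
    (hcong : ∀ p q, p ≠ i₀ → q ≠ i₀ → (Y p - Y q) % 10 = 0)
    (hcross : ∀ p, p ≠ i₀ → (Y p - Y i₀) % 10 = 5)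
    (hsum : ∑ p, Y p = 0)
    (hnorm : ∑ p, Y p * Y p = 300) :
    ((∀ p, p ≠ i₀ → (Y p = 1 ∨ Y p = -9)) ∧ (Y i₀ = 6 ∨ Y i₀ = -14)) ∨
    ((∀ p, p ≠ i₀ → (Y p = -1 ∨ Y p = 9)) ∧ (Y i₀ = -6 ∨ Y i₀ = 14)) := by
  classical
  -- choose a reference index distinct from i₀
  obtain ⟨p₀, hp₀⟩ : ∃ p₀ : Fin 25, p₀ ≠ i₀ := by
    by_cases h : i₀ = 0
    · exact ⟨1, by rw [h]; decide⟩
    · exact ⟨0, fun hc => h hc.symm⟩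
  set r := Y p₀ with hr
  set c := r % 10 with hc
  set E24 := (Finset.univ : Finset (Fin 25)).erase i₀ with hE24
  have hcard24 : E24.card = 24 := by
    rw [hE24, Finset.card_erase_of_mem (Finset.mem_univ _)]
    simp
  have hmem24 : ∀ p, p ∈ E24 ↔ p ≠ i₀ := by
    intro p
    rw [hE24]
    simp
  have hse : Y i₀ + ∑ p ∈ E24, Y p = 0 := by
    have := Finset.add_sum_erase (Finset.univ) Y (Finset.mem_univ i₀)
    rw [hE24]
    omega
  have hqe : Y i₀ * Y i₀ + ∑ p ∈ E24, Y p * Y p = 300 := by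
    have := Finset.add_sum_erase (Finset.univ) (fun p => Y p * Y p) (Finset.mem_univ i₀)
    rw [hE24]
    omega
  -- divisibility representation
  have hrc : (10:ℤ) ∣ r - c := by
    have : r % 10 + 10 * (r / 10) = r := by omega
    exact ⟨r / 10, by omega⟩
  have hrep : ∀ p, p ≠ i₀ → (10:ℤ) ∣ Y p - c := by
    intro p hp
    have h1 : (10:ℤ) ∣ Y p - r := Int.dvd_of_emod_eq_zero (hcong p p₀ hp hp₀)
    have : Y p - c = (Y p - r) + (r - c) := by ring
    rw [this]
    exact dvd_add h1 hrc
  have hrep' : ∀ p, p ≠ i₀ → ∃ k : ℤ, Y p = c + 10 * k := by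
    intro p hp
    obtain ⟨k, hk⟩ := hrep p hp
    exact ⟨k, by omega⟩
  have hrep0 : ∃ k : ℤ, Y i₀ = (c - 5) + 10 * k := by
    have h1 : (Y p₀ - Y i₀) % 10 = 5 := hcross p₀ hp₀
    have h2 : (Y p₀ - Y i₀) % 10 + 10 * ((Y p₀ - Y i₀) / 10) = Y p₀ - Y i₀ := by omega
    obtain ⟨m, hm⟩ := hrc
    exact ⟨m - ((Y p₀ - Y i₀) / 10), by rw [hr] at *; omega⟩
  obtain ⟨k₀, hk₀⟩ := hrep0
  -- r is odd
  have hodd : r % 2 = 1 := by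
    have hd1 : (10:ℤ) ∣ ∑ p ∈ E24, (Y p - c) :=
      Finset.dvd_sum (fun p hp => hrep p ((hmem24 p).mp hp))
    have hd2 : ∑ p ∈ E24, (Y p - c) = (∑ p ∈ E24, Y p) - 24 * c := by
      rw [Finset.sum_sub_distrib, Finset.sum_const, hcard24]
      push_cast
      ring
    rw [hd2] at hd1
    obtain ⟨m, hm⟩ := hd1
    obtain ⟨m', hm'⟩ := hrc
    have hcr : 0 ≤ c ∧ c < 10 := ⟨Int.emod_nonneg r (by norm_num), Int.emod_lt_of_pos r (by norm_num)⟩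
    omega
  have hcval : c = 1 ∨ c = 3 ∨ c = 5 ∨ c = 7 ∨ c = 9 := by
    have hcr : 0 ≤ c ∧ c < 10 := ⟨Int.emod_nonneg r (by norm_num), Int.emod_lt_of_pos r (by norm_num)⟩
    have : c % 2 = 1 := by omega
    omega
  -- sum of quadratic terms
  set T := fun p => (Y p - c) * (Y p - c + 10) with hT
  have hTnn : ∀ p ∈ E24, 0 ≤ T p := by
    intro p hp
    exact (qaux (Y p) c (hrep' p ((hmem24 p).mp hp))).1
  have hTor : ∀ p ∈ E24, T p = 0 ∨ 200 ≤ T p := by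
    intro p hp
    exact (qaux (Y p) c (hrep' p ((hmem24 p).mp hp))).2
  have hEexp : ∑ p ∈ E24, T p
      = (∑ p ∈ E24, Y p * Y p) - (2*c - 10) * (∑ p ∈ E24, Y p) + 24*(c*c - 10*c) := by
    have hterm : ∀ p ∈ E24, T p = (Y p * Y p) - (2*c - 10) * Y p + (c*c - 10*c) := by
      intro p _
      rw [hT]
      ring
    rw [Finset.sum_congr rfl hterm]
    rw [Finset.sum_add_distrib, Finset.sum_sub_distrib, Finset.sum_const, hcard24, ← Finset.mul_sum]
    push_cast
    ring
  have hEval : ∑ p ∈ E24, T p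
      = (300 - Y i₀ * Y i₀) + (2*c - 10) * Y i₀ + 24*(c*c - 10*c) := by
    rw [hEexp]
    have h1 : ∑ p ∈ E24, Y p * Y p = 300 - Y i₀ * Y i₀ := by omega
    have h2 : ∑ p ∈ E24, Y p = - Y i₀ := by omega
    rw [h1, h2]
    ring
  have hE0 : 0 ≤ ∑ p ∈ E24, T p := Finset.sum_nonneg hTnn
  have hEor : (∑ p ∈ E24, T p) = 0 ∨ 200 ≤ ∑ p ∈ E24, T p := by
    by_cases hall : ∀ p ∈ E24, T p = 0
    · left
      exact Finset.sum_eq_zero hall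
    · right
      push_neg at hall
      obtain ⟨p, hp, hne⟩ := hall
      have h200 : 200 ≤ T p := by
        rcases hTor p hp with h | h
        · exact absurd h hne
        · exact h
      calc (200:ℤ) ≤ T p := h200
        _ ≤ ∑ p ∈ E24, T p := Finset.single_le_sum hTnn hp
  -- all-zero gives membership in {c, c-10}
  have hallzero : (∑ p ∈ E24, T p) = 0 → ∀ p, p ≠ i₀ → (Y p = c ∨ Y p = c - 10) := by
    intro h0 p hp
    have hz := (Finset.sum_eq_zero_iff_of_nonneg hTnn).mp h0 p ((hmem24 p).mpr hp)
    rw [hT] at hz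
    rcases mul_eq_zero.mp hz with h | h
    · left; omega
    · right; omega
  rcases hcval with hc1 | hc1 | hc1 | hc1 | hc1
  · -- c = 1
    rw [hEval, hc1] at hE0 hEor
    have hY0 : Y i₀ = -14 ∨ Y i₀ = -4 ∨ Y i₀ = 6 := by
      have hb1 : Y i₀ ≤ 6 := by nlinarith
      have hb2 : -14 ≤ Y i₀ := by nlinarith
      omega
    have hY0' : Y i₀ = -14 ∨ Y i₀ = 6 := by
      rcases hY0 with h | h | h
      · left; exact h
      · exfalso
        rw [h] at hEor
        rcases hEor with h' | h' <;> omega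
      · right; exact h
    left
    constructor
    · intro p hp
      have hzero : (∑ q ∈ E24, T q) = 0 := by
        rw [hEval, hc1]
        rcases hY0' with h | h <;> rw [h] <;> ring
      have := hallzero hzero p hp
      omega
    · omega
  · -- c = 3 : impossible
    exfalso
    rw [hEval, hc1] at hE0
    nlinarith
  · -- c = 5 : impossible
    exfalso
    rw [hEval, hc1] at hE0
    nlinarith
  · -- c = 7 : impossible
    exfalso
    rw [hEval, hc1] at hE0
    nlinarith
  · -- c = 9
    rw [hEval, hc1] at hE0 hEor
    have hY0 : Y i₀ = -6 ∨ Y i₀ = 4 ∨ Y i₀ = 14 := by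
      have hb1 : Y i₀ ≤ 14 := by nlinarith
      have hb2 : -6 ≤ Y i₀ := by nlinarith
      omega
    have hY0' : Y i₀ = -6 ∨ Y i₀ = 14 := by
      rcases hY0 with h | h | h
      · left; exact h
      · exfalso
        rw [h] at hEor
        rcases hEor with h' | h' <;> omega
      · right; exact h
    right
    constructor
    · intro p hp
      have hzero : (∑ q ∈ E24, T q) = 0 := by
        rw [hEval, hc1]
        rcases hY0' with h | h <;> rw [h] <;> ring
      have := hallzero hzero p hp
      omega
    · omega

end ClassLemma


section FinalAux

/-- a rational vector with integral differences, zero sum and even integral norm has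
coordinates in `(1/5)ℤ`. -/
lemma five_adic (g : Fin 25 → ℚ) (hdiff : ∀ p q : Fin 25, ∃ m : ℤ, g p - g q = m)
    (hsum : ∑ p, g p = 0) (hnorm : stdDot 25 g g = 12) :
    ∀ p, ∃ m : ℤ, 5 * g p = m := by
  classical
  have hd : ∀ p, ∃ m : ℤ, g p - g 0 = m := fun p => hdiff p 0
  choose d hdd using hd
  have hgp : ∀ p, g p = g 0 + (d p : ℚ) := fun p => by
    have := hdd p
    linarith
  set D := ∑ p, d p with hD
  set S := ∑ p, d p * d p with hS
  have hcastD : ∑ p, (d p : ℚ) = (D : ℚ) := by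
    rw [hD]
    push_cast
    rfl
  have hcastS : ∑ p, (d p : ℚ) * (d p : ℚ) = (S : ℚ) := by
    rw [hS]
    push_cast
    rfl
  have h25 : (25:ℚ) * g 0 = -(D : ℚ) := by
    have h1 : ∑ p, g p = 25 * g 0 + (D : ℚ) := by
      rw [Finset.sum_congr rfl (fun p _ => hgp p), Finset.sum_add_distrib, Finset.sum_const,
        hcastD]
      simp
    rw [hsum] at h1
    linarith
  have hKq : (25:ℚ) * (g 0 * g 0) = (S : ℚ) - 12 := by
    have hexp : ∀ p : Fin 25, (g 0 + (d p : ℚ)) * (g 0 + (d p : ℚ))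
        = g 0 * g 0 + 2 * g 0 * (d p : ℚ) + (d p : ℚ) * (d p : ℚ) := fun p => by ring
    have h1 : stdDot 25 g g = 25 * (g 0 * g 0) + 2 * g 0 * (D : ℚ) + (S : ℚ) := by
      unfold stdDot
      rw [Finset.sum_congr rfl (fun p _ => by rw [hgp p])]
      rw [Finset.sum_congr rfl (fun p _ => hexp p), Finset.sum_add_distrib,
        Finset.sum_add_distrib, Finset.sum_const, ← Finset.mul_sum, hcastD, hcastS]
      simp
    rw [hnorm] at h1
    have hDval : (D:ℚ) = -(25 * g 0) := by linarith
    rw [hDval] at h1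
    ring_nf at h1 ⊢
    linarith
  have hDK : D * D = 25 * (S - 12) := by
    have hq : ((D * D : ℤ) : ℚ) = ((25 * (S - 12) : ℤ) : ℚ) := by
      push_cast
      have e1 : (D:ℚ) * D = (25 * g 0) * (25 * g 0) := by rw [h25]; ring
      rw [e1]
      have e2 : (25:ℚ) * g 0 * (25 * g 0) = 25 * (25 * (g 0 * g 0)) := by ring
      rw [e2, hKq]
    exact_mod_cast hq
  have h5D : (5:ℤ) ∣ D := by
    have hp : Prime (5:ℤ) := by norm_num
    have h1 : (5:ℤ) ∣ D * D := ⟨5 * (S - 12), by linarith [hDK]⟩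
    rcases hp.dvd_mul.mp h1 with h | h <;> exact h
  obtain ⟨D', hD'⟩ := h5D
  have hg5 : (5:ℚ) * g 0 = ((-D' : ℤ) : ℚ) := by
    have e1 : (D : ℚ) = ((5 * D' : ℤ) : ℚ) := by exact_mod_cast hD'
    push_cast at e1
    push_cast
    linarith
  intro p
  refine ⟨-D' + 5 * d p, ?_⟩
  rw [hgp p]
  push_cast
  push_cast at hg5
  linarith

/-- the final contradiction for two orthogonal vectors of the same class -/
lemma final_pair (Yi Yj : Fin 25 → ℤ) (i₀ s : Fin 25) (hs : s ≠ i₀) (t d : ℤ)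
    (hd : d = 10 ∨ d = -10)
    (hvi : ∀ p, p ≠ i₀ → Yi p = t ∨ Yi p = t + d)
    (hvj : ∀ p, p ≠ i₀ → Yj p = t ∨ Yj p = t + d)
    (hsi : Yi s = t + d) (hsj : Yj s = t + d)
    (hdot : ∑ p, Yi p * Yj p = 0)
    (hsumi : ∑ p, Yi p = 0) (hsumj : ∑ p, Yj p = 0)
    (hEsmall : -(Yi i₀ * Yj i₀) + t * (Yi i₀ + Yj i₀) + 24 * (t * t) < 100) : False := by
  classical
  set E24 := (Finset.univ : Finset (Fin 25)).erase i₀ with hE24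
  have hcard24 : E24.card = 24 := by
    rw [hE24, Finset.card_erase_of_mem (Finset.mem_univ _)]
    simp
  have hmem24 : ∀ p, p ∈ E24 ↔ p ≠ i₀ := by
    intro p
    rw [hE24]
    simp
  have hs24 : s ∈ E24 := (hmem24 s).mpr hs
  have hdot' : Yi i₀ * Yj i₀ + ∑ p ∈ E24, Yi p * Yj p = 0 := by
    have := Finset.add_sum_erase (Finset.univ) (fun p => Yi p * Yj p) (Finset.mem_univ i₀)
    rw [hE24]
    omega
  have hsi' : Yi i₀ + ∑ p ∈ E24, Yi p = 0 := by
    have := Finset.add_sum_erase (Finset.univ) Yi (Finset.mem_univ i₀)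
    rw [hE24]
    omega
  have hsj' : Yj i₀ + ∑ p ∈ E24, Yj p = 0 := by
    have := Finset.add_sum_erase (Finset.univ) Yj (Finset.mem_univ i₀)
    rw [hE24]
    omega
  set W := fun p => (Yi p - t) * (Yj p - t) with hW
  have hWnn : ∀ p ∈ E24, 0 ≤ W p := by
    intro p hp
    have hp' := (hmem24 p).mp hp
    simp only [hW]
    rcases hvi p hp' with h1 | h1 <;> rcases hvj p hp' with h2 | h2 <;> rw [h1, h2] <;> nlinarith
  have hWs : W s = d * d := by
    simp only [hW]
    rw [hsi, hsj]
    ring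
  have hW100 : (100:ℤ) ≤ ∑ p ∈ E24, W p := by
    calc (100:ℤ) = d * d := by rcases hd with h | h <;> rw [h] <;> norm_num
      _ = W s := hWs.symm
      _ ≤ ∑ p ∈ E24, W p := Finset.single_le_sum hWnn hs24
  have hWsum : ∑ p ∈ E24, W p
      = -(Yi i₀ * Yj i₀) + t * (Yi i₀ + Yj i₀) + 24 * (t * t) := by
    have hterm : ∀ p ∈ E24, W p = Yi p * Yj p - t * Yi p - t * Yj p + t * t := by
      intro p _
      simp only [hW]
      ring
    rw [Finset.sum_congr rfl hterm]
    rw [Finset.sum_add_distrib, Finset.sum_sub_distrib, Finset.sum_sub_distrib,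
      Finset.sum_const, hcard24, ← Finset.mul_sum, ← Finset.mul_sum]
    have e1 : ∑ p ∈ E24, Yi p * Yj p = -(Yi i₀ * Yj i₀) := by omega
    have e2 : ∑ p ∈ E24, Yi p = -(Yi i₀) := by omega
    have e3 : ∑ p ∈ E24, Yj p = -(Yj i₀) := by omega
    rw [e1, e2, e3]
    push_cast
    ring
  rw [hWsum] at hW100
  omega

end FinalAux

lemma stdDot_svdiff {n : ℕ} (x : Fin n → ℚ) (p q : Fin n) :
    stdDot n x (sv n p - sv n q) = x p - x q := by
  rw [stdDot_sub_right, stdDot_sv, stdDot_sv]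

end Stmt2Aux

/-- An odd Niemeier lattice of minimum norm 2 whose two even neighbors have root
sublattices isometric to `D₂₄` and `A₂₄` respectively does not contain `L⁺`. -/
theorem stmt2 {V : Type*} [AddCommGroup V] [Module ℚ V]
    (B : V →ₗ[ℚ] V →ₗ[ℚ] ℚ) (hB : IsPosDefSymm B)
    (N : Submodule ℤ V) (hN : IsOddNiemeier B N)
    (hmin : HasMinNorm B N 2)
    (E₁ E₂ : Submodule ℤ V) (hne : E₁ ≠ E₂)
    (hE₁ : IsEvenNeighbor B N E₁) (hE₂ : IsEvenNeighbor B N E₂)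
    (hr₁ : LatticeIsometric (fun x y => B x y) (stdDot 24) (rootSublattice B E₁) (latD 24))
    (hr₂ : LatticeIsometric (fun x y => B x y) (stdDot 25) (rootSublattice B E₂) (latA 24)) :
    ¬ ContainsLPlus B N := by
  rintro ⟨h, hhN, a, haN, hh2, hha, haa, horth⟩
  classical
  obtain ⟨f₁, hf₁⟩ := hr₁
  obtain ⟨f₂, hf₂⟩ := hr₂
  have hBs := hB.1
  have hrank : Module.finrank ℚ V = 24 := hN.2.2.2
  have hf₁' : ∀ x y : rootSublattice B E₁, stdDot 24 (f₁ x) (f₁ y) = B x y := hf₁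
  have hf₂' : ∀ x y : rootSublattice B E₂, stdDot 25 (f₂ x) (f₂ y) = B x y := hf₂
  obtain ⟨i₀, hbig, hnrel, hnrel'⟩ := special_index hBs hN hE₁ hE₂ f₁ hf₁' f₂ hf₂'
  -- the image of h is a root e_k - e_l with k, l ≠ i₀
  have hhE₂ : h ∈ E₂ := even_mem_neighbor hBs hN hE₂ hhN ⟨1, by rw [hh2]; norm_num⟩
  have hhR : h ∈ rootSublattice B E₂ := mem_rootSub hhE₂ hh2
  have hz2 : stdDot 25 ((f₂ ⟨h, hhR⟩ : latA 24) : Fin 25 → ℚ) (f₂ ⟨h, hhR⟩) = 2 := by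
    rw [hf₂' ⟨h, hhR⟩ ⟨h, hhR⟩]; exact hh2
  obtain ⟨k, l, hkl, hzeq⟩ := normTwo_latA (f₂ ⟨h, hhR⟩).2 hz2
  have hhpb : pbA f₂ k l = h := by
    unfold pbA
    rw [show (⟨sv 25 k - sv 25 l, svdiff_mem_latA k l⟩ : latA 24) = f₂ ⟨h, hhR⟩ from
      Subtype.ext hzeq.symm, LinearEquiv.symm_apply_apply]
  have hrelkl : relA f₂ N k l := ⟨hkl, by rw [hhpb]; exact hhN⟩
  have hkne : k ≠ i₀ := fun hc => hnrel' l (hc ▸ hrelkl)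
  have hlne : l ≠ i₀ := fun hc => hnrel k (hc ▸ hrelkl)
  have hFh : Fmap f₂ hf₂' hrank h = sv 25 k - sv 25 l := by
    rw [← hhpb]
    exact Fmap_pb f₂ hf₂' hrank _ _
  -- coordinates of the a i
  set xv : Fin 5 → Fin 25 → ℚ := fun i => Fmap f₂ hf₂' hrank (a i) with hxv
  have hxnorm : ∀ i, stdDot 25 (xv i) (xv i) = 3 := by
    intro i
    rw [hxv]
    simp only
    rw [Fmap_pres f₂ hf₂' hrank]
    exact haa i
  have hxdot : ∀ i j, i ≠ j → stdDot 25 (xv i) (xv j) = 0 := by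
    intro i j hij
    rw [hxv]
    simp only
    rw [Fmap_pres f₂ hf₂' hrank]
    exact horth i j hij
  have hxsum : ∀ i, ∑ p, xv i p = 0 := fun i => Fmap_sum_coords f₂ hf₂' hrank (a i)
  have hxkl : ∀ i, xv i k - xv i l = 1 := by
    intro i
    have h1 : stdDot 25 (xv i) (Fmap f₂ hf₂' hrank h) = B (a i) h := Fmap_pres f₂ hf₂' hrank _ _
    rw [hFh, stdDot_svdiff] at h1
    rw [h1, hBs]
    exact hha i
  have hpairA : ∀ i p q, B (a i) (pbA f₂ p q) = xv i p - xv i q := by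
    intro i p q
    unfold pbA
    rw [Fmap_pair f₂ hf₂' hrank, stdDot_svdiff]
  have hdiffint : ∀ i, ∀ p q, p ≠ i₀ → q ≠ i₀ → ∃ m : ℤ, xv i p - xv i q = m := by
    intro i p q hp hq
    by_cases hpq : p = q
    · exact ⟨0, by rw [hpq]; simp⟩
    · have hrel := hbig p q hp hq hpq
      obtain ⟨m, hm⟩ := pair_int hN.1 (haN i) hrel.2
      exact ⟨m, by rw [← hpairA i p q]; exact hm⟩
  -- a i + a i lies in E₂
  have haaE : ∀ i, a i + a i ∈ E₂ := by
    intro i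
    have hnorm12 : B (a i + a i) (a i + a i) = 12 := by
      have : B (a i + a i) (a i + a i) = 4 * B (a i) (a i) := by
        simp only [map_add, LinearMap.add_apply]
        ring
      rw [this, haa i]
      norm_num
    exact even_mem_neighbor hBs hN hE₂ (N.add_mem (haN i) (haN i)) ⟨6, by rw [hnorm12]; norm_num⟩
  have hgdiff : ∀ i, ∀ p q : Fin 25, ∃ m : ℤ,
      (xv i p + xv i p) - (xv i q + xv i q) = m := by
    intro i p q
    by_cases hpq : p = q
    · exact ⟨0, by rw [hpq]; simp⟩
    · obtain ⟨m, hm⟩ := pair_int hE₂.1 (haaE i) (pbA_mem_E₂ f₂ p q)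
      refine ⟨m, ?_⟩
      have hFadd : Fmap f₂ hf₂' hrank (a i + a i) = xv i + xv i := by
        rw [map_add, hxv]
      have h1 : B (a i + a i) (pbA f₂ p q) = (xv i + xv i) p - (xv i + xv i) q := by
        unfold pbA
        rw [Fmap_pair f₂ hf₂' hrank, hFadd, stdDot_svdiff]
      rw [h1] at hm
      simpa using hm
  -- coordinates lie in (1/10)ℤ
  have hx10 : ∀ i p, ∃ m : ℤ, 10 * xv i p = m := by
    intro i p
    have hg := five_adic (fun p => xv i p + xv i p) (hgdiff i)
      (by rw [Finset.sum_add_distrib, hxsum i]; simp)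
      (by
        have : stdDot 25 (xv i + xv i) (xv i + xv i) = 4 * stdDot 25 (xv i) (xv i) := by
          unfold stdDot
          rw [Finset.mul_sum]
          exact Finset.sum_congr rfl fun p _ => by simp only [Pi.add_apply]; ring
        show stdDot 25 (fun p => xv i p + xv i p) (fun p => xv i p + xv i p) = 12
        have he : (fun p => xv i p + xv i p) = xv i + xv i := rfl
        rw [he, this, hxnorm i]
        norm_num)
    obtain ⟨m, hm⟩ := hg p
    exact ⟨m, by linarith⟩
  -- cross differences are never integral
  have hcross_not_int : ∀ i p, p ≠ i₀ → ¬ ∃ m : ℤ, xv i p - xv i i₀ = m := by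
    rintro i p hp ⟨m, hm⟩
    have halldiff : ∀ p' q' : Fin 25, ∃ m : ℤ, xv i p' - xv i q' = m := by
      intro p' q'
      by_cases hp' : p' = i₀ <;> by_cases hq' : q' = i₀
      · exact ⟨0, by rw [hp', hq']; simp⟩
      · obtain ⟨m₁, hm₁⟩ := hdiffint i p q' hp hq'
        refine ⟨m₁ - m, ?_⟩
        rw [hp']
        push_cast
        linarith
      · obtain ⟨m₁, hm₁⟩ := hdiffint i p' p hp' hp
        refine ⟨m₁ + m, ?_⟩
        rw [hq']
        push_cast
        linarith
      · exact hdiffint i p' q' hp' hq'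
    have hrstarN : pbA f₂ k i₀ ∉ N := fun hc => hnrel k ⟨hkne, hc⟩
    obtain ⟨hle₂, a₂, ha₂E, ha₂D, hco₂⟩ := hE₂.2.2.2.2
    have hrstarD : pbA f₂ k i₀ ∉ N ⊓ E₂ := fun hc => hrstarN hc.1
    have hrstarco : pbA f₂ k i₀ - a₂ ∈ N ⊓ E₂ := by
      rcases hco₂ _ (pbA_mem_E₂ f₂ k i₀) with hc | hc
      · exact absurd hc hrstarD
      · exact hc
    have hinteg : ∀ e ∈ E₂, ∃ m : ℤ, B (a i) e = m := by
      intro e he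
      rcases hco₂ e he with hc | hc
      · exact pair_int hN.1 (haN i) hc.1
      · have hsub : e - pbA f₂ k i₀ ∈ N ⊓ E₂ := by
          have : (e - a₂) - (pbA f₂ k i₀ - a₂) ∈ N ⊓ E₂ := (N ⊓ E₂).sub_mem hc hrstarco
          simpa using this
        obtain ⟨m₁, hm₁⟩ := pair_int hN.1 (haN i) hsub.1
        obtain ⟨m₂, hm₂⟩ := halldiff k i₀
        refine ⟨m₁ + m₂, ?_⟩
        have he2 : e = (e - pbA f₂ k i₀) + pbA f₂ k i₀ := by abel
        rw [he2, map_add, hm₁]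
        rw [hpairA i k i₀] at *
        push_cast
        rw [hm₂]
      -- done
    have haiE₂ : a i ∈ E₂ := by
      have hdual : a i ∈ dualLattice B E₂ := hinteg
      rw [hE₂.2.1]
      exact hdual
    obtain ⟨n, hn⟩ := hE₂.2.2.1 (a i) haiE₂
    rw [haa i] at hn
    have : (3:ℤ) = 2 * n := by exact_mod_cast hn
    omega
  -- integral rescaled coordinates
  choose Y hY using hx10
  have hYsum : ∀ i, ∑ p, Y i p = 0 := by
    intro i
    have hq : ((∑ p, Y i p : ℤ) : ℚ) = 0 := by
      push_cast
      rw [Finset.sum_congr rfl (fun p _ => (hY i p).symm), ← Finset.mul_sum, hxsum i, mul_zero]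
    exact_mod_cast hq
  have hYnorm : ∀ i, ∑ p, Y i p * Y i p = 300 := by
    intro i
    have hq : ((∑ p, Y i p * Y i p : ℤ) : ℚ) = 300 := by
      push_cast
      rw [Finset.sum_congr rfl (fun p _ => by rw [← hY i p])]
      have he : ∀ p : Fin 25, 10 * xv i p * (10 * xv i p) = 100 * (xv i p * xv i p) := by
        intro p; ring
      rw [Finset.sum_congr rfl (fun p _ => he p), ← Finset.mul_sum]
      have : ∑ p, xv i p * xv i p = 3 := hxnorm i
      rw [this]
      norm_num
    exact_mod_cast hq
  have hYdot : ∀ i j, i ≠ j → ∑ p, Y i p * Y j p = 0 := by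
    intro i j hij
    have hq : ((∑ p, Y i p * Y j p : ℤ) : ℚ) = 0 := by
      push_cast
      rw [Finset.sum_congr rfl (fun p _ => by rw [← hY i p, ← hY j p])]
      have he : ∀ p : Fin 25, 10 * xv i p * (10 * xv j p) = 100 * (xv i p * xv j p) := by
        intro p; ring
      rw [Finset.sum_congr rfl (fun p _ => he p), ← Finset.mul_sum]
      have : ∑ p, xv i p * xv j p = 0 := hxdot i j hij
      rw [this]
      norm_num
    exact_mod_cast hq
  have hYcong : ∀ i, ∀ p q, p ≠ i₀ → q ≠ i₀ → (Y i p - Y i q) % 10 = 0 := by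
    intro i p q hp hq
    obtain ⟨m, hm⟩ := hdiffint i p q hp hq
    have hq' : ((Y i p - Y i q : ℤ) : ℚ) = ((10 * m : ℤ) : ℚ) := by
      push_cast
      rw [← hY i p, ← hY i q]
      linarith
    have : Y i p - Y i q = 10 * m := by exact_mod_cast hq'
    omega
  have hYcross : ∀ i, ∀ p, p ≠ i₀ → (Y i p - Y i i₀) % 10 = 5 := by
    intro i p hp
    obtain ⟨m₂, hm₂⟩ := hgdiff i p i₀
    have hq' : ((Y i p - Y i i₀ : ℤ) : ℚ) = ((5 * m₂ : ℤ) : ℚ) := by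
      push_cast
      rw [← hY i p, ← hY i i₀]
      linarith
    have heq : Y i p - Y i i₀ = 5 * m₂ := by exact_mod_cast hq'
    have hodd : m₂ % 2 = 1 := by
      by_contra hev
      have hev' : m₂ % 2 = 0 := by omega
      obtain ⟨t, ht⟩ : (2:ℤ) ∣ m₂ := Int.dvd_of_emod_eq_zero hev'
      apply hcross_not_int i p hp
      refine ⟨t, ?_⟩
      have hc2 : (m₂ : ℚ) = 2 * (t : ℚ) := by exact_mod_cast ht
      linarith
    omega
  have hYkl : ∀ i, Y i k - Y i l = 10 := by
    intro i
    have hq' : ((Y i k - Y i l : ℤ) : ℚ) = 10 := by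
      push_cast
      rw [← hY i k, ← hY i l]
      have := hxkl i
      linarith
    exact_mod_cast hq'
  -- classification of each vector
  have hclass := fun i => class_lemma (Y i) i₀ (hYcong i) (hYcross i) (hYsum i) (hYnorm i)
  -- pigeonhole on the four classes
  set tag : Fin 5 → Fin 4 := fun i =>
    if Y i i₀ = 6 then 0 else if Y i i₀ = -14 then 1 else if Y i i₀ = -6 then 2 else 3 with htag
  obtain ⟨i, j, hij, htagij⟩ := Fintype.exists_ne_map_eq_of_card_lt tag (by simp)
  -- same-class pair contradiction
  rcases hclass i with ⟨hvi, hv0i⟩ | ⟨hvi, hv0i⟩ <;> rcases hclass j with ⟨hvj, hv0j⟩ | ⟨hvj, hv0j⟩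
  · -- both left
    have hYli : Y i l = 1 + (-10) := by
      have h1 := hvi k hkne
      have h2 := hvi l hlne
      have h3 := hYkl i
      omega
    have hYlj : Y j l = 1 + (-10) := by
      have h1 := hvj k hkne
      have h2 := hvj l hlne
      have h3 := hYkl j
      omega
    have hv0eq : Y i i₀ = Y j i₀ := by
      rcases hv0i with h1 | h1 <;> rcases hv0j with h2 | h2 <;>
        simp [htag, h1, h2] at htagij <;> omega
    refine final_pair (Y i) (Y j) i₀ l hlne 1 (-10) (Or.inr rfl)
      (fun p hp => by rcases hvi p hp with hh | hh <;> [left; right] <;> omega)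
      (fun p hp => by rcases hvj p hp with hh | hh <;> [left; right] <;> omega)
      hYli hYlj (hYdot i j hij) (hYsum i) (hYsum j) ?_
    rcases hv0i with h1 | h1 <;> rw [h1] <;> rw [h1] at hv0eq <;> rw [← hv0eq] <;> norm_num
  · -- left vs right : impossible by tag
    exfalso
    rcases hv0i with h1 | h1 <;> rcases hv0j with h2 | h2 <;>
      simp [htag, h1, h2] at htagij
  · -- right vs left : impossible by tag
    exfalso
    rcases hv0i with h1 | h1 <;> rcases hv0j with h2 | h2 <;>
      simp [htag, h1, h2] at htagij
  · -- both right
    have hYki : Y i k = -1 + 10 := by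
      have h1 := hvi k hkne
      have h2 := hvi l hlne
      have h3 := hYkl i
      omega
    have hYkj : Y j k = -1 + 10 := by
      have h1 := hvj k hkne
      have h2 := hvj l hlne
      have h3 := hYkl j
      omega
    have hv0eq : Y i i₀ = Y j i₀ := by
      rcases hv0i with h1 | h1 <;> rcases hv0j with h2 | h2 <;>
        simp [htag, h1, h2] at htagij <;> omega
    refine final_pair (Y i) (Y j) i₀ k hkne (-1) 10 (Or.inl rfl)
      (fun p hp => by rcases hvi p hp with hh | hh <;> [left; right] <;> omega)
      (fun p hp => by rcases hvj p hp with hh | hh <;> [left; right] <;> omega)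
      hYki hYkj (hYdot i j hij) (hYsum i) (hYsum j) ?_
    rcases hv0i with h1 | h1 <;> rw [h1] <;> rw [h1] at hv0eq <;> rw [← hv0eq] <;> norm_num

end Niemeier
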